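/- arXiv:1605.00138 — 12 statements merged into one kernel-verified Lean document; each statement's English description precedes it below -/
import Mathlib

section
/- Let n ≥ 1. The restriction map from conjugation-invariant polynomial functions on Matₙ(ℂ) to polynomial functions on the space of companion matrices is an isomorphism. Precisely: (1) if p is a conjugation-invariant polynomial function on Matₙ(ℂ) that vanishes on every companion matrix, then p = 0; (2) for every polynomial q ∈ ℂ[y₁,…,yₙ] there exists a conjugation-invariant polynomial function p on Matₙ(ℂ) such that p(C(a₁,…,aₙ)) = q(a₁,…,aₙ) for all (a₁,…,aₙ) ∈ ℂⁿ, where C(a₁,…,aₙ) denotes the companion matrix with subdiagonal entries 1, last column (−a₁,…,−aₙ)ᵀ, and all other entries 0. -/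
open Matrix

/-- Evaluation of a polynomial in the `n²` matrix entries at a matrix `A`:
a polynomial function on `Matₙ(ℂ)`. -/
noncomputable def evalMat {n : ℕ} (P : MvPolynomial (Fin n × Fin n) ℂ)
    (A : Matrix (Fin n) (Fin n) ℂ) : ℂ :=
  MvPolynomial.eval (fun q => A q.1 q.2) P

/-- A companion matrix: subdiagonal entries equal 1, the last column is arbitrary,
and all other entries are 0. -/
def IsCompanion {n : ℕ} (M : Matrix (Fin n) (Fin n) ℂ) : Prop :=
  ∀ i j : Fin n, (j : ℕ) + 1 < n →
    (((i : ℕ) = (j : ℕ) + 1 → M i j = 1) ∧ ((i : ℕ) ≠ (j : ℕ) + 1 → M i j = 0))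

/-- The companion matrix `C(a₁,…,aₙ)` with subdiagonal entries `1`,
last column `(-a₁,…,-aₙ)ᵀ` and all other entries `0`. -/
def companionOf {n : ℕ} (a : Fin n → ℂ) : Matrix (Fin n) (Fin n) ℂ :=
  Matrix.of fun i j =>
    if (j : ℕ) + 1 = n then -a i else if (i : ℕ) = (j : ℕ) + 1 then 1 else 0

lemma companion_pow_col {n : ℕ} (hn : 0 < n) (a : Fin n → ℂ) :
    ∀ k : ℕ, k < n → ∀ j : Fin n,
      ((companionOf a) ^ k) j ⟨0, hn⟩ = if (j : ℕ) = k then 1 else 0 := by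
  intro k
  induction k with
  | zero =>
    intro _ j
    rw [pow_zero, Matrix.one_apply]
    simp [Fin.ext_iff]
  | succ k ih =>
    intro hk j
    have hk' : k < n := Nat.lt_of_succ_lt hk
    rw [pow_succ', Matrix.mul_apply]
    have : ∀ l : Fin n, companionOf a j l * ((companionOf a) ^ k) l ⟨0, hn⟩
        = if l = (⟨k, hk'⟩ : Fin n) then companionOf a j l else 0 := by
      intro l
      rw [ih hk' l]
      by_cases h : (l : ℕ) = k
      · simp [h, Fin.ext_iff]
      · simp [h, Fin.ext_iff]
    rw [Finset.sum_congr rfl fun l _ => this l, Finset.sum_ite_eq']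
    simp only [Finset.mem_univ, if_true]
    have hne : k + 1 ≠ n := Nat.ne_of_lt hk
    simp [companionOf, hne]

lemma companion_pow_n_col {n : ℕ} (hn : 0 < n) (a : Fin n → ℂ) (j : Fin n) :
    ((companionOf a) ^ n) j ⟨0, hn⟩ = -a j := by
  obtain ⟨m, rfl⟩ : ∃ m, n = m + 1 := ⟨n - 1, (Nat.succ_pred_eq_of_pos hn).symm⟩
  rw [pow_succ', Matrix.mul_apply]
  have hm : m < m + 1 := Nat.lt_succ_self m
  have : ∀ l : Fin (m+1), companionOf a j l * ((companionOf a) ^ m) l ⟨0, hn⟩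
      = if l = (⟨m, hm⟩ : Fin (m+1)) then companionOf a j l else 0 := by
    intro l
    rw [companion_pow_col hn a m hm l]
    by_cases h : (l : ℕ) = m
    · simp [h, Fin.ext_iff]
    · simp [h, Fin.ext_iff]
  rw [Finset.sum_congr rfl fun l _ => this l, Finset.sum_ite_eq']
  simp [companionOf]

lemma charpoly_units_conj {n : ℕ} (u : (Matrix (Fin n) (Fin n) ℂ)ˣ)
    (A : Matrix (Fin n) (Fin n) ℂ) :
    ((u : Matrix (Fin n) (Fin n) ℂ) * A *
      ((u⁻¹ : (Matrix (Fin n) (Fin n) ℂ)ˣ) : Matrix (Fin n) (Fin n) ℂ)).charpoly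
      = A.charpoly := by
  set f : Matrix (Fin n) (Fin n) ℂ →+* Matrix (Fin n) (Fin n) (Polynomial ℂ) :=
    (Polynomial.C : ℂ →+* Polynomial ℂ).mapMatrix with hf
  set U : (Matrix (Fin n) (Fin n) (Polynomial ℂ))ˣ := Units.map f.toMonoidHom u with hU
  have hcoe : (U : Matrix (Fin n) (Fin n) (Polynomial ℂ)) = f (u : Matrix (Fin n) (Fin n) ℂ) := rfl
  have hcoe' : ((U⁻¹ : _ˣ) : Matrix (Fin n) (Fin n) (Polynomial ℂ))
      = f ((u⁻¹ : _ˣ) : Matrix (Fin n) (Fin n) ℂ) := by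
    rw [← MonoidHom.map_inv]; rfl
  have key : charmatrix ((u : Matrix (Fin n) (Fin n) ℂ) * A * ((u⁻¹ : _ˣ) : Matrix (Fin n) (Fin n) ℂ))
      = (U : Matrix (Fin n) (Fin n) (Polynomial ℂ)) * charmatrix A * ((U⁻¹ : _ˣ) : _) := by
    unfold charmatrix
    rw [mul_sub, sub_mul]
    congr 1
    · have hc : Commute (Matrix.scalar (Fin n) (Polynomial.X : Polynomial ℂ))
          (U : Matrix (Fin n) (Fin n) (Polynomial ℂ)) :=
        Matrix.scalar_commute _ (fun r' => Commute.all _ _) _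
      rw [← hc.eq, mul_assoc, Units.mul_inv, mul_one]
    · rw [_root_.map_mul, _root_.map_mul, hcoe, hcoe']
  show (charmatrix _).det = (charmatrix A).det
  rw [key]
  exact Matrix.det_units_conj U (charmatrix A)

lemma charpoly_coeff_companion {n : ℕ} (hn : 0 < n) (a : Fin n → ℂ) (i : Fin n) :
    (companionOf a).charpoly.coeff i = a i := by
  have h0 : Polynomial.aeval (companionOf a) (companionOf a).charpoly = 0 :=
    Matrix.aeval_self_charpoly _
  rw [Polynomial.aeval_eq_sum_range] at h0
  rw [Matrix.charpoly_natDegree_eq_dim, Fintype.card_fin] at h0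
  have h1 : (∑ k ∈ Finset.range (n+1),
      (companionOf a).charpoly.coeff k • (companionOf a) ^ k) i ⟨0, hn⟩ = 0 := by
    rw [h0]; rfl
  rw [Matrix.sum_apply] at h1
  rw [Finset.sum_range_succ] at h1
  have hmon : (companionOf a).charpoly.coeff n = 1 := by
    have := (Matrix.charpoly_monic (companionOf a)).coeff_natDegree
    rwa [Matrix.charpoly_natDegree_eq_dim, Fintype.card_fin] at this
  simp only [Matrix.smul_apply, smul_eq_mul] at h1
  rw [hmon, one_mul, companion_pow_n_col hn a i] at h1
  have h2 : ∀ k ∈ Finset.range n,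
      (companionOf a).charpoly.coeff k * ((companionOf a) ^ k) i ⟨0, hn⟩
        = if (i : ℕ) = k then (companionOf a).charpoly.coeff k else 0 := by
    intro k hk
    rw [companion_pow_col hn a k (Finset.mem_range.1 hk) i]
    by_cases h : (i : ℕ) = k <;> simp [h]
  rw [Finset.sum_congr rfl h2, Finset.sum_ite_eq] at h1
  simp only [Finset.mem_range, i.isLt, if_true] at h1
  linear_combination h1

lemma similar_companion {n : ℕ} (A : Matrix (Fin n) (Fin n) ℂ) (v : Fin n → ℂ)
    (h : IsUnit (Matrix.of fun i (k : Fin n) => ((A ^ (k : ℕ)) *ᵥ v) i).det) :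
    ∃ (u : (Matrix (Fin n) (Fin n) ℂ)ˣ) (Cm : Matrix (Fin n) (Fin n) ℂ),
      IsCompanion Cm ∧ A = (u : Matrix (Fin n) (Fin n) ℂ) * Cm *
        ((u⁻¹ : (Matrix (Fin n) (Fin n) ℂ)ˣ) : Matrix (Fin n) (Fin n) ℂ) := by
  set g : Matrix (Fin n) (Fin n) ℂ := Matrix.of fun i (k : Fin n) => ((A ^ (k : ℕ)) *ᵥ v) i with hg
  have hgu : IsUnit g := (Matrix.isUnit_iff_isUnit_det g).2 h
  have hcoe : (hgu.unit : Matrix (Fin n) (Fin n) ℂ) = g := hgu.unit_spec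
  have hcoeinv : ((hgu.unit⁻¹ : _ˣ) : Matrix (Fin n) (Fin n) ℂ) = g⁻¹ := by
    rw [Matrix.coe_units_inv, hcoe]
  refine ⟨hgu.unit, g⁻¹ * A * g, ?_, ?_⟩
  · intro i j hj
    have hAg : ∀ l : Fin n, (A * g) l j = g l ⟨(j : ℕ) + 1, hj⟩ := by
      intro l
      have : (A * g) l j = ((A * A ^ (j : ℕ)) *ᵥ v) l := by
        rw [Matrix.mul_apply, ← Matrix.mulVec_mulVec]
        simp only [hg, Matrix.mulVec, dotProduct, Matrix.of_apply]
      rw [this, ← pow_succ']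
      rfl
    have key : (g⁻¹ * A * g) i j = (1 : Matrix (Fin n) (Fin n) ℂ) i ⟨(j : ℕ) + 1, hj⟩ := by
      rw [mul_assoc, Matrix.mul_apply]
      have : ∀ l, g⁻¹ i l * (A * g) l j = g⁻¹ i l * g l ⟨(j : ℕ) + 1, hj⟩ := fun l => by
        rw [hAg l]
      rw [Finset.sum_congr rfl fun l _ => this l, ← Matrix.mul_apply,
        Matrix.nonsing_inv_mul g h]
    rw [key, Matrix.one_apply]
    constructor
    · intro hij
      have : i = (⟨(j : ℕ) + 1, hj⟩ : Fin n) := Fin.ext hij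
      simp [this]
    · intro hij
      have : i ≠ (⟨(j : ℕ) + 1, hj⟩ : Fin n) := fun hc => hij (by rw [hc])
      simp [this]
  · rw [hcoe, hcoeinv]
    rw [← mul_assoc, ← mul_assoc, Matrix.mul_nonsing_inv g h, one_mul, mul_assoc,
      Matrix.mul_nonsing_inv g h, mul_one]

/-- The restriction map from conjugation-invariant polynomial functions on `Matₙ(ℂ)`
to polynomial functions on the space of companion matrices is an isomorphism:
(1) injectivity: an invariant polynomial function vanishing on all companion matrices
is identically zero; (2) surjectivity: every polynomial `q` in the coefficients
`(a₁,…,aₙ)` arises as the restriction of a conjugation-invariant polynomial function. -/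
theorem invariant_polynomials_restrict_iso_companion (n : ℕ) (hn : 1 ≤ n) :
    (∀ P : MvPolynomial (Fin n × Fin n) ℂ,
      (∀ (g : (Matrix (Fin n) (Fin n) ℂ)ˣ) (A : Matrix (Fin n) (Fin n) ℂ),
        evalMat P ((g : Matrix (Fin n) (Fin n) ℂ) * A *
          ((g⁻¹ : (Matrix (Fin n) (Fin n) ℂ)ˣ) : Matrix (Fin n) (Fin n) ℂ)) = evalMat P A) →
      (∀ C : Matrix (Fin n) (Fin n) ℂ, IsCompanion C → evalMat P C = 0) →
      ∀ A : Matrix (Fin n) (Fin n) ℂ, evalMat P A = 0) ∧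
    (∀ q : MvPolynomial (Fin n) ℂ,
      ∃ P : MvPolynomial (Fin n × Fin n) ℂ,
        (∀ (g : (Matrix (Fin n) (Fin n) ℂ)ˣ) (A : Matrix (Fin n) (Fin n) ℂ),
          evalMat P ((g : Matrix (Fin n) (Fin n) ℂ) * A *
            ((g⁻¹ : (Matrix (Fin n) (Fin n) ℂ)ˣ) : Matrix (Fin n) (Fin n) ℂ)) = evalMat P A) ∧
        ∀ a : Fin n → ℂ, evalMat P (companionOf a) = MvPolynomial.eval a q) := by
  have hn0 : 0 < n := hn
  constructor
  · -- Part 1: injectivity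
    intro P hInv hVan A
    classical
    let 𝔸 : Matrix (Fin n) (Fin n) (MvPolynomial ((Fin n × Fin n) ⊕ Fin n) ℂ) :=
      Matrix.of fun i j => MvPolynomial.X (Sum.inl (i, j))
    let M : Matrix (Fin n) (Fin n) (MvPolynomial ((Fin n × Fin n) ⊕ Fin n) ℂ) :=
      Matrix.of fun i (k : Fin n) => ((𝔸 ^ (k : ℕ)) *ᵥ fun l => MvPolynomial.X (Sum.inr l)) i
    let D := M.det
    let P' : MvPolynomial ((Fin n × Fin n) ⊕ Fin n) ℂ :=
      MvPolynomial.rename Sum.inl P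
    have hmap : ∀ x : ((Fin n × Fin n) ⊕ Fin n) → ℂ,
        M.map (MvPolynomial.eval x) = Matrix.of (fun i (k : Fin n) =>
          (((Matrix.of fun i' j' => x (Sum.inl (i', j'))) ^ (k : ℕ)) *ᵥ
            fun l => x (Sum.inr l)) i) := by
      intro x
      ext i k
      have hpow : (MvPolynomial.eval x).mapMatrix (𝔸 ^ (k : ℕ))
          = (Matrix.of fun i' j' => x (Sum.inl (i', j'))) ^ (k : ℕ) := by
        rw [map_pow]
        congr 1
        ext i' j'
        simp [𝔸]
      show MvPolynomial.eval x ((𝔸 ^ (k : ℕ) *ᵥ fun l => MvPolynomial.X (Sum.inr l)) i) = _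
      simp only [Matrix.mulVec, dotProduct, Matrix.of_apply]
      rw [map_sum (MvPolynomial.eval x) _ Finset.univ]
      refine Finset.sum_congr rfl fun l _ => ?_
      rw [_root_.map_mul, MvPolynomial.eval_X]
      congr 1
      exact congrFun (congrFun hpow i) l
    have hzero : ∀ x : ((Fin n × Fin n) ⊕ Fin n) → ℂ, MvPolynomial.eval x (P' * D) = 0 := by
      intro x
      have hP' : MvPolynomial.eval x P'
          = evalMat P (Matrix.of fun i' j' => x (Sum.inl (i', j'))) := by
        rw [MvPolynomial.eval_rename]
        rfl
      have hD : MvPolynomial.eval x D = (Matrix.of (fun i (k : Fin n) =>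
          (((Matrix.of fun i' j' => x (Sum.inl (i', j'))) ^ (k : ℕ)) *ᵥ
            fun l => x (Sum.inr l)) i)).det := by
        rw [show MvPolynomial.eval x D = (M.map (MvPolynomial.eval x)).det from
          RingHom.map_det _ _, hmap x]
      rw [_root_.map_mul, hP', hD]
      by_cases hu : IsUnit (Matrix.of (fun i (k : Fin n) =>
          (((Matrix.of fun i' j' => x (Sum.inl (i', j'))) ^ (k : ℕ)) *ᵥ
            fun l => x (Sum.inr l)) i)).det
      · obtain ⟨u, Cm, hC, hA⟩ := similar_companion _ _ hu
        rw [hA, hInv u Cm, hVan Cm hC, zero_mul]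
      · rw [show (Matrix.of (fun i (k : Fin n) =>
            (((Matrix.of fun i' j' => x (Sum.inl (i', j'))) ^ (k : ℕ)) *ᵥ
              fun l => x (Sum.inr l)) i)).det = 0 by simpa using hu, mul_zero]
    have hPD : P' * D = 0 := MvPolynomial.funext fun x => by rw [hzero x, map_zero]
    have hD0 : D ≠ 0 := by
      intro hDeq
      set x₀ : ((Fin n × Fin n) ⊕ Fin n) → ℂ :=
        Sum.elim (fun q' => companionOf (fun _ => (0 : ℂ)) q'.1 q'.2)
          (fun l => if l = (⟨0, hn0⟩ : Fin n) then 1 else 0) with hx₀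
      have hAx : (Matrix.of fun i' j' => x₀ (Sum.inl (i', j')))
          = companionOf (fun _ => (0 : ℂ)) := by
        ext i' j'; rfl
      have h1 : MvPolynomial.eval x₀ D = (1 : ℂ) := by
        rw [show MvPolynomial.eval x₀ D = (M.map (MvPolynomial.eval x₀)).det from
          RingHom.map_det _ _, hmap x₀]
        have hmat : (Matrix.of (fun i (k : Fin n) =>
            (((Matrix.of fun i' j' => x₀ (Sum.inl (i', j'))) ^ (k : ℕ)) *ᵥ
              fun l => x₀ (Sum.inr l)) i)) = (1 : Matrix (Fin n) (Fin n) ℂ) := by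
          ext i k
          rw [Matrix.of_apply, hAx]
          have : ((companionOf (fun _ => (0 : ℂ))) ^ (k : ℕ) *ᵥ
              fun l => x₀ (Sum.inr l)) i
              = ((companionOf (fun _ => (0 : ℂ))) ^ (k : ℕ)) i ⟨0, hn0⟩ := by
            simp only [Matrix.mulVec, dotProduct, hx₀, Sum.elim_inr,
              mul_ite, mul_one, mul_zero]
            rw [Finset.sum_ite_eq']
            simp
          rw [this, companion_pow_col hn0 _ (k : ℕ) k.isLt i, Matrix.one_apply]
          simp [Fin.ext_iff]
        rw [hmat, Matrix.det_one]
      rw [hDeq, map_zero] at h1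
      exact zero_ne_one h1
    have hP'0 : P' = 0 := by
      rcases mul_eq_zero.1 hPD with h | h
      · exact h
      · exact absurd h hD0
    have hP0 : P = 0 := by
      have hinj := MvPolynomial.rename_injective (R := ℂ)
        (Sum.inl : (Fin n × Fin n) → (Fin n × Fin n) ⊕ Fin n) Sum.inl_injective
      apply hinj
      rw [show MvPolynomial.rename Sum.inl P = P' from rfl, hP'0, map_zero]
    rw [hP0]
    simp [evalMat]
  · -- Part 2: surjectivity
    intro q
    classical
    let genM : Matrix (Fin n) (Fin n) (MvPolynomial (Fin n × Fin n) ℂ) :=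
      Matrix.of fun i j => MvPolynomial.X (i, j)
    let c : Fin n → MvPolynomial (Fin n × Fin n) ℂ := fun i => genM.charpoly.coeff i
    have aeval_eq : ∀ {σ : Type} (x : σ → ℂ) (p : MvPolynomial σ ℂ),
        MvPolynomial.aeval x p = MvPolynomial.eval x p := fun x p =>
      RingHom.congr_fun (MvPolynomial.coe_aeval_eq_eval x) p
    have hc : ∀ (A : Matrix (Fin n) (Fin n) ℂ) (i : Fin n),
        MvPolynomial.eval (fun q' : Fin n × Fin n => A q'.1 q'.2) (c i)
          = A.charpoly.coeff i := by
      intro A i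
      have hmapA : genM.map (MvPolynomial.eval fun q' : Fin n × Fin n => A q'.1 q'.2) = A := by
        ext i' j'
        simp [genM]
      have hcp := Matrix.charpoly_map genM (MvPolynomial.eval fun q' : Fin n × Fin n => A q'.1 q'.2)
      rw [hmapA] at hcp
      show (MvPolynomial.eval fun q' : Fin n × Fin n => A q'.1 q'.2) (genM.charpoly.coeff i) = _
      rw [hcp, Polynomial.coeff_map]
    have hEval : ∀ A : Matrix (Fin n) (Fin n) ℂ,
        evalMat (MvPolynomial.aeval c q) A
          = MvPolynomial.eval (fun i : Fin n => A.charpoly.coeff i) q := by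
      intro A
      unfold evalMat
      rw [← aeval_eq]
      rw [MvPolynomial.comp_aeval_apply]
      rw [aeval_eq]
      have harg : (fun i => MvPolynomial.aeval (fun q' : Fin n × Fin n => A q'.1 q'.2) (c i))
          = fun i : Fin n => A.charpoly.coeff i := by
        funext i
        rw [aeval_eq, hc]
      rw [harg]
    refine ⟨MvPolynomial.aeval c q, ?_, ?_⟩
    · intro g A
      rw [hEval, hEval, charpoly_units_conj]
    · intro a
      rw [hEval]
      have : (fun i : Fin n => (companionOf a).charpoly.coeff i) = a :=
        funext fun i => charpoly_coeff_companion hn0 a i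
      rw [this]
end

section
/- Let n ≥ 1, let f ∈ Matₙ(ℂ) be the matrix with (i+1,i) entry 1 for 1 ≤ i ≤ n−1 and all other entries 0, and let b ⊆ Matₙ(ℂ) be the subspace of upper triangular matrices. Then the affine subspace f + b is stable under conjugation by N: for every u ∈ N and every x ∈ f + b, one has u·x·u⁻¹ ∈ f + b. -/
open Matrix

/-- The principal nilpotent matrix `f`, with entries `1` on the subdiagonal
and `0` elsewhere. -/
def fMat (n : ℕ) : Matrix (Fin n) (Fin n) ℂ :=
  Matrix.of fun i j => if (i : ℕ) = (j : ℕ) + 1 then 1 else 0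

/-- A unipotent upper triangular matrix: upper triangular with all diagonal
entries equal to `1` (an element of the group `N`). -/
def IsUniUpper {n : ℕ} (u : Matrix (Fin n) (Fin n) ℂ) : Prop :=
  u.BlockTriangular id ∧ ∀ i : Fin n, u i i = 1

/-- The affine subspace `f + b` (with `b` the upper triangular matrices) is stable
under conjugation by the group `N` of unipotent upper triangular matrices. -/
theorem fb_stable_under_N (n : ℕ) (hn : 1 ≤ n)
    (u : (Matrix (Fin n) (Fin n) ℂ)ˣ)
    (hu : IsUniUpper (u : Matrix (Fin n) (Fin n) ℂ))
    (x : Matrix (Fin n) (Fin n) ℂ)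
    (hx : ∃ b : Matrix (Fin n) (Fin n) ℂ, b.BlockTriangular id ∧ x = fMat n + b) :
    ∃ b' : Matrix (Fin n) (Fin n) ℂ, b'.BlockTriangular id ∧
      (u : Matrix (Fin n) (Fin n) ℂ) * x *
        ((u⁻¹ : (Matrix (Fin n) (Fin n) ℂ)ˣ) : Matrix (Fin n) (Fin n) ℂ) = fMat n + b' := by
  obtain ⟨b, hb, rfl⟩ := hx
  set U : Matrix (Fin n) (Fin n) ℂ := (u : Matrix (Fin n) (Fin n) ℂ) with hUdef
  set V : Matrix (Fin n) (Fin n) ℂ := ((u⁻¹ : (Matrix (Fin n) (Fin n) ℂ)ˣ) :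
    Matrix (Fin n) (Fin n) ℂ) with hVdef
  haveI : Invertible U := u.invertible
  have hVU : V = U⁻¹ := by exact Matrix.coe_units_inv u
  have hVtri : V.BlockTriangular id := by
    rw [hVU]; exact blockTriangular_inv_of_blockTriangular hu.1
  have hUV : U * V = 1 := u.mul_inv
  have hVdiag : ∀ i : Fin n, V i i = 1 := by
    intro i
    have h1 : (U * V) i i = 1 := by rw [hUV, Matrix.one_apply_eq]
    rw [mul_apply] at h1
    rw [Finset.sum_eq_single i] at h1
    · rwa [hu.2 i, one_mul] at h1
    · intro k _ hk
      rcases lt_or_gt_of_ne hk with h | h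
      · rw [hu.1 (show (id k : Fin n) < id i from h), zero_mul]
      · rw [hVtri (show (id i : Fin n) < id k from h), mul_zero]
    · intro h; exact absurd (Finset.mem_univ i) h
  refine ⟨U * (fMat n + b) * V - fMat n, ?_, by abel⟩
  intro i j hij
  have hij' : j < i := hij
  have key : ∀ l k : Fin n, U i k * (fMat n + b) k l * V l j =
      if k = i then (if l = j then fMat n i j else 0) else 0 := by
    intro l k
    by_cases hk : k = i
    · subst hk
      by_cases hl : l = j
      · subst hl
        simp [hu.2, hVdiag, Matrix.add_apply, hb hij']
      · rcases lt_or_gt_of_ne hl with h | h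
        · -- l < j < i = k, so (fMat n + b) k l = 0
          have hfb : (fMat n + b) k l = 0 := by
            have h1 : b k l = 0 := hb (show (id l : Fin n) < id k from h.trans hij')
            have h2 : fMat n k l = 0 := by
              simp only [fMat, Matrix.of_apply, ite_eq_right_iff]
              intro hkl
              have := Fin.lt_def.mp h
              have := Fin.lt_def.mp hij'
              omega
            simp [Matrix.add_apply, h1, h2]
          simp [hfb, hl]
        · rw [hVtri (show (id j : Fin n) < id l from h), mul_zero]
          simp [hl]
    · rcases lt_or_gt_of_ne hk with h | h
      · rw [hu.1 (show (id k : Fin n) < id i from h), zero_mul, zero_mul]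
        simp [hk]
      · by_cases hl : j < l
        · rw [hVtri (show (id j : Fin n) < id l from hl), mul_zero]
          simp [hk]
        · push_neg at hl
          have hfb : (fMat n + b) k l = 0 := by
            have hlk : l < k := lt_of_le_of_lt hl (hij'.trans h)
            have h1 : b k l = 0 := hb (show (id l : Fin n) < id k from hlk)
            have h2 : fMat n k l = 0 := by
              simp only [fMat, Matrix.of_apply, ite_eq_right_iff]
              intro hkl
              have := Fin.lt_def.mp h
              have := Fin.lt_def.mp hij'
              have := Fin.le_def.mp hl
              omega
            simp [Matrix.add_apply, h1, h2]
          simp [hfb, hk]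
  have hmain : (U * (fMat n + b) * V) i j = fMat n i j := by
    rw [mul_apply]
    simp_rw [mul_apply, Finset.sum_mul]
    simp_rw [key]
    simp
  simp [Matrix.sub_apply, hmain]
end

section
/- (Kostant) Let n ≥ 1, let f ∈ Matₙ(ℂ) be the matrix with (i+1,i) entry 1 for 1 ≤ i ≤ n−1 and all other entries 0, let b ⊆ Matₙ(ℂ) be the subspace of upper triangular matrices, and let S be the set of companion matrices. The adjoint action map N × S → f + b, (u, x) ↦ u·x·u⁻¹, is a bijection. -/
open Matrix

/-- Membership in the affine subspace `f + b`, where `b` is the space of upper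
triangular matrices. -/
def InFB {n : ℕ} (y : Matrix (Fin n) (Fin n) ℂ) : Prop :=
  (y - fMat n).BlockTriangular id

namespace Kostant


variable {n : ℕ}

/-- entrywise content of InFB -/
lemma infb_entry {y : Matrix (Fin (n+1)) (Fin (n+1)) ℂ} (hy : InFB y)
    {i j : Fin (n+1)} (hij : (j : ℕ) < (i : ℕ)) :
    y i j = if (i : ℕ) = (j : ℕ) + 1 then 1 else 0 := by
  have h := hy hij
  have : y i j - fMat (n+1) i j = 0 := h
  have h2 : y i j = fMat (n+1) i j := by
    have := sub_eq_zero.mp this; exact this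
  rw [h2]; rfl

lemma uni_det {u : Matrix (Fin (n+1)) (Fin (n+1)) ℂ} (hu : IsUniUpper u) :
    IsUnit u.det := by
  rw [Matrix.det_of_upperTriangular hu.1]
  simp [hu.2]

lemma uni_inv_mul {u : Matrix (Fin (n+1)) (Fin (n+1)) ℂ} (hu : IsUniUpper u) :
    u⁻¹ * u = 1 := Matrix.nonsing_inv_mul u (uni_det hu)

lemma uni_mul_inv {u : Matrix (Fin (n+1)) (Fin (n+1)) ℂ} (hu : IsUniUpper u) :
    u * u⁻¹ = 1 := Matrix.mul_nonsing_inv u (uni_det hu)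

/-- powers of y ∈ f+b applied to e₁ -/
lemma pow_col {y : Matrix (Fin (n+1)) (Fin (n+1)) ℂ} (hy : InFB y) :
    ∀ (k : ℕ) (i : Fin (n+1)),
      (k < (i : ℕ) → (y ^ k) i 0 = 0) ∧ ((i : ℕ) = k → (y ^ k) i 0 = 1) := by
  intro k
  induction k with
  | zero =>
    intro i
    constructor
    · intro hi
      rw [pow_zero, Matrix.one_apply_ne]
      intro h; rw [h] at hi; simp at hi
    · intro hi
      have : i = 0 := Fin.ext hi
      rw [this, pow_zero, Matrix.one_apply_eq]
  | succ k IH =>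
    intro i
    have expand : (y ^ (k+1)) i 0 = ∑ m, y i m * (y ^ k) m 0 := by
      rw [pow_succ' y k, Matrix.mul_apply]
    constructor
    · intro hi
      rw [expand]
      apply Finset.sum_eq_zero
      intro m _
      by_cases hm : k < (m : ℕ)
      · rw [(IH m).1 hm, mul_zero]
      · push_neg at hm
        have : (m : ℕ) + 1 < (i : ℕ) := by omega
        rw [infb_entry hy (by omega)]
        rw [if_neg (by omega), zero_mul]
    · intro hi
      rw [expand]
      have hk : k < n + 1 := by omega
      rw [Finset.sum_eq_single_of_mem ⟨k, hk⟩ (Finset.mem_univ _)]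
      · rw [(IH ⟨k, hk⟩).2 rfl, mul_one, infb_entry hy (by simp; omega)]
        simp [hi]
      · intro m _ hm
        by_cases hmk : k < (m : ℕ)
        · rw [(IH m).1 hmk, mul_zero]
        · push_neg at hmk
          have hmk' : (m : ℕ) < k := by
            rcases lt_or_eq_of_le hmk with h | h
            · exact h
            · exact absurd (Fin.ext (h.trans rfl) : m = ⟨k, hk⟩) hm
          rw [infb_entry hy (by omega), if_neg (by omega), zero_mul]

/-- the matrix V whose columns are y^j e₁ -/
def Vmat (y : Matrix (Fin (n+1)) (Fin (n+1)) ℂ) : Matrix (Fin (n+1)) (Fin (n+1)) ℂ :=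
  Matrix.of fun i j => (y ^ (j : ℕ)) i 0

lemma Vmat_uniUpper {y : Matrix (Fin (n+1)) (Fin (n+1)) ℂ} (hy : InFB y) :
    IsUniUpper (Vmat y) := by
  constructor
  · intro i j hij
    exact (pow_col hy (j : ℕ) i).1 hij
  · intro i
    exact (pow_col hy (i : ℕ) i).2 rfl

/-- powers of a companion matrix applied to e₁ -/
lemma comp_pow {x : Matrix (Fin (n+1)) (Fin (n+1)) ℂ} (hx : IsCompanion x) :
    ∀ (k : ℕ), k < n + 1 → ∀ i : Fin (n+1),
      (x ^ k) i 0 = if (i : ℕ) = k then 1 else 0 := by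
  intro k
  induction k with
  | zero =>
    intro _ i
    rw [pow_zero]
    by_cases h : i = 0
    · rw [h, Matrix.one_apply_eq]; simp
    · rw [Matrix.one_apply_ne h, if_neg (fun h' => h (Fin.ext (by rw [h', Fin.val_zero])))]
  | succ k IH =>
    intro hk i
    have hk' : k < n + 1 := by omega
    have expand : (x ^ (k+1)) i 0 = ∑ m, x i m * (x ^ k) m 0 := by
      rw [pow_succ' x k, Matrix.mul_apply]
    rw [expand, Finset.sum_eq_single_of_mem ⟨k, hk'⟩ (Finset.mem_univ _)]
    · rw [IH hk' ⟨k, hk'⟩, if_pos rfl, mul_one]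
      have hcol : ((⟨k, hk'⟩ : Fin (n+1)) : ℕ) + 1 < n + 1 := hk
      by_cases h : (i : ℕ) = k + 1
      · rw [(hx i ⟨k, hk'⟩ hcol).1 h, if_pos h]
      · rw [(hx i ⟨k, hk'⟩ hcol).2 h, if_neg h]
    · intro m _ hm
      rw [IH hk' m, if_neg (by simpa [Fin.ext_iff] using hm), mul_zero]


/-- The conjugate of a companion by a unipotent lies in f + b. -/
lemma conj_infb {u x : Matrix (Fin (n+1)) (Fin (n+1)) ℂ}
    (hu : IsUniUpper u) (hx : IsCompanion x) : InFB (u * x * u⁻¹) := by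
  set y := u * x * u⁻¹ with hy
  have hyu : y * u = u * x := by
    rw [hy, mul_assoc (u*x), uni_inv_mul hu, mul_one]
  have key : ∀ J : ℕ, ∀ j i : Fin (n+1), (j : ℕ) = J → (j : ℕ) < (i : ℕ) →
      y i j = if (i : ℕ) = (j : ℕ) + 1 then 1 else 0 := by
    intro J
    induction J using Nat.strong_induction_on with
    | _ J IH =>
      intro j i hjJ hij
      have hcol : (j : ℕ) + 1 < n + 1 := by have := i.isLt; omega
      have e1 : (y * u) i j = y i j := by
        rw [Matrix.mul_apply]
        rw [Finset.sum_eq_single_of_mem j (Finset.mem_univ _)]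
        · rw [hu.2 j, mul_one]
        · intro m _ hm
          by_cases hmj : (j : ℕ) < (m : ℕ)
          · rw [hu.1 hmj, mul_zero]
          · have hmj' : (m : ℕ) < (j : ℕ) := by
              rcases lt_or_eq_of_le (not_lt.mp hmj) with h | h
              · exact h
              · exact absurd (Fin.ext h) hm
            rw [IH (m : ℕ) (by omega) m i rfl (by omega),
              if_neg (by omega), zero_mul]
      have e2 : (u * x) i j = u i ⟨(j : ℕ) + 1, hcol⟩ := by
        rw [Matrix.mul_apply]
        rw [Finset.sum_eq_single_of_mem ⟨(j : ℕ) + 1, hcol⟩ (Finset.mem_univ _)]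
        · rw [(hx ⟨(j : ℕ)+1, hcol⟩ j hcol).1 rfl, mul_one]
        · intro m _ hm
          rw [(hx m j hcol).2 (by simpa [Fin.ext_iff] using hm), mul_zero]
      have e3 : y i j = u i ⟨(j : ℕ) + 1, hcol⟩ := by
        rw [← e1, hyu, e2]
      rw [e3]
      by_cases h : (i : ℕ) = (j : ℕ) + 1
      · rw [if_pos h]
        have : i = ⟨(j : ℕ) + 1, hcol⟩ := Fin.ext h
        rw [this]; exact hu.2 _
      · rw [if_neg h]
        exact hu.1 (show ((⟨(j : ℕ)+1, hcol⟩ : Fin (n+1)) : ℕ) < (i : ℕ) by simp; omega)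
  intro i j hij
  have hij' : (j : ℕ) < (i : ℕ) := hij
  show (y - fMat (n+1)) i j = 0
  rw [Matrix.sub_apply, key (j : ℕ) j i rfl hij']
  show (if (i:ℕ) = (j:ℕ)+1 then (1:ℂ) else 0) - (if (i:ℕ) = (j:ℕ)+1 then (1:ℂ) else 0) = 0
  ring

/-- V of the conjugate recovers u. -/
lemma Vmat_conj {u x : Matrix (Fin (n+1)) (Fin (n+1)) ℂ}
    (hu : IsUniUpper u) (hx : IsCompanion x) : Vmat (u * x * u⁻¹) = u := by
  have hpow : ∀ k : ℕ, (u * x * u⁻¹) ^ k * u = u * x ^ k := by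
    intro k
    induction k with
    | zero => simp
    | succ k IH =>
      rw [pow_succ, pow_succ, mul_assoc _ _ u, mul_assoc (u*x), uni_inv_mul hu,
        mul_one, ← mul_assoc, IH, mul_assoc]
  ext i j
  have h1 : ((u * x * u⁻¹) ^ (j : ℕ) * u) i 0 = ((u * x * u⁻¹) ^ (j : ℕ)) i 0 := by
    rw [Matrix.mul_apply]
    rw [Finset.sum_eq_single_of_mem 0 (Finset.mem_univ _)]
    · rw [hu.2 0, mul_one]
    · intro m _ hm
      rw [hu.1 (show ((0:Fin (n+1)) : ℕ) < (m : ℕ) by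
        rw [Fin.val_zero]; exact Nat.pos_of_ne_zero (fun h' => hm (Fin.ext (by rw [h', Fin.val_zero])))), mul_zero]
  have h2 : (u * x ^ (j : ℕ)) i 0 = u i j := by
    rw [Matrix.mul_apply]
    rw [Finset.sum_eq_single_of_mem j (Finset.mem_univ _)]
    · rw [comp_pow hx (j : ℕ) j.isLt j, if_pos rfl, mul_one]
    · intro m _ hm
      rw [comp_pow hx (j : ℕ) j.isLt m,
        if_neg (by simpa [Fin.ext_iff] using hm), mul_zero]
  show ((u * x * u⁻¹) ^ (j : ℕ)) i 0 = u i j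
  rw [← h1, hpow, h2]

/-- V⁻¹ y V is companion for y ∈ f + b. -/
lemma comp_of_infb {y : Matrix (Fin (n+1)) (Fin (n+1)) ℂ} (hy : InFB y)
    (hV : IsUniUpper (Vmat y)) :
    IsCompanion ((Vmat y)⁻¹ * y * Vmat y) := by
  intro i j hcol
  have e1 : ∀ i', (y * Vmat y) i' j = Vmat y i' ⟨(j : ℕ) + 1, hcol⟩ := by
    intro i'
    show (y * Vmat y) i' j = (y ^ ((j : ℕ) + 1)) i' 0
    rw [Matrix.mul_apply, pow_succ' y, Matrix.mul_apply]
    rfl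
  have e2 : ((Vmat y)⁻¹ * y * Vmat y) i j = ((Vmat y)⁻¹ * Vmat y) i ⟨(j : ℕ) + 1, hcol⟩ := by
    rw [mul_assoc, Matrix.mul_apply, Matrix.mul_apply]
    exact Finset.sum_congr rfl fun m _ => by rw [e1 m]
  rw [e2, uni_inv_mul hV]
  constructor
  · intro h
    rw [show i = ⟨(j:ℕ)+1, hcol⟩ from Fin.ext h, Matrix.one_apply_eq]
  · intro h
    rw [Matrix.one_apply_ne (by simpa [Fin.ext_iff] using h)]


lemma conj_sandwich {u : Matrix (Fin (n+1)) (Fin (n+1)) ℂ} (hu : IsUniUpper u)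
    (a : Matrix (Fin (n+1)) (Fin (n+1)) ℂ) : u⁻¹ * (u * a * u⁻¹) * u = a := by
  rw [mul_assoc u a u⁻¹, ← mul_assoc u⁻¹ u (a * u⁻¹), uni_inv_mul hu, one_mul,
    mul_assoc, uni_inv_mul hu, mul_one]


end Kostant

/-- Kostant: the adjoint action map `N × S → f + b`, `(u, x) ↦ u x u⁻¹`, is a
bijection, where `S` is the set of companion matrices and `b` the upper
triangular matrices. -/
theorem adjoint_action_bijection (n : ℕ) (hn : 1 ≤ n) :
    ∃ Φ : {u : Matrix (Fin n) (Fin n) ℂ // IsUniUpper u} ×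
          {x : Matrix (Fin n) (Fin n) ℂ // IsCompanion x} →
          {y : Matrix (Fin n) (Fin n) ℂ // InFB y},
      (∀ p, (Φ p : Matrix (Fin n) (Fin n) ℂ) =
          (p.1 : Matrix (Fin n) (Fin n) ℂ) * (p.2 : Matrix (Fin n) (Fin n) ℂ) *
            (p.1 : Matrix (Fin n) (Fin n) ℂ)⁻¹) ∧
      Function.Bijective Φ := by
  obtain ⟨m, rfl⟩ : ∃ m, n = m + 1 := ⟨n - 1, by omega⟩
  refine ⟨fun p => ⟨(p.1 : Matrix (Fin (m+1)) (Fin (m+1)) ℂ) * (p.2 : Matrix (Fin (m+1)) (Fin (m+1)) ℂ) * (p.1 : Matrix (Fin (m+1)) (Fin (m+1)) ℂ)⁻¹,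
      Kostant.conj_infb p.1.2 p.2.2⟩, fun p => rfl, ?_, ?_⟩
  · rintro ⟨⟨u, hu⟩, ⟨x, hx⟩⟩ ⟨⟨u', hu'⟩, ⟨x', hx'⟩⟩ hpq
    have hy : u * x * u⁻¹ = u' * x' * u'⁻¹ := congrArg Subtype.val hpq
    have huu : u = u' := by
      rw [← Kostant.Vmat_conj hu hx, hy, Kostant.Vmat_conj hu' hx']
    subst huu
    have hxx : x = x' := by
      have h2 := congrArg (fun z => u⁻¹ * z * u) hy
      simpa [Kostant.conj_sandwich hu] using h2
    subst hxx
    rfl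
  · rintro ⟨y, hy⟩
    have hV := Kostant.Vmat_uniUpper hy
    refine ⟨⟨⟨Kostant.Vmat y, hV⟩, ⟨(Kostant.Vmat y)⁻¹ * y * Kostant.Vmat y,
      Kostant.comp_of_infb hy hV⟩⟩, ?_⟩
    apply Subtype.ext
    show Kostant.Vmat y * ((Kostant.Vmat y)⁻¹ * y * Kostant.Vmat y) * (Kostant.Vmat y)⁻¹ = y
    rw [mul_assoc (Kostant.Vmat y)⁻¹ y, ← mul_assoc (Kostant.Vmat y) (Kostant.Vmat y)⁻¹,
      Kostant.uni_mul_inv hV, one_mul, mul_assoc,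
      Kostant.uni_mul_inv hV, mul_one]
end

section
/- Let n ≥ 1, f ∈ Matₙ(ℂ) the matrix with (i+1,i) entries 1 and all other entries 0, and b the subspace of upper triangular matrices. The restriction map from conjugation-invariant polynomial functions on Matₙ(ℂ) to N-invariant polynomial functions on f + b is bijective: (1) a conjugation-invariant polynomial function on Matₙ(ℂ) vanishing on f + b is identically zero; (2) every N-invariant polynomial function on f + b is the restriction of a conjugation-invariant polynomial function on Matₙ(ℂ). -/
open Matrix

namespace KostantAux

open MvPolynomial Polynomial Finset

variable {n : ℕ} {S T : Type*} [CommRing S] [CommRing T]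

/-- Krylov matrix: columns `e₀, A e₀, A² e₀, …`. -/
noncomputable def kry [NeZero n] (A : Matrix (Fin n) (Fin n) S) : Matrix (Fin n) (Fin n) S :=
  Matrix.of fun i j => (A ^ (j : ℕ)) i 0

/-- Companion matrix of the characteristic polynomial of `A`. -/
noncomputable def cmp (A : Matrix (Fin n) (Fin n) S) : Matrix (Fin n) (Fin n) S :=
  Matrix.of fun i j =>
    if (j : ℕ) = n - 1 then -(A.charpoly.coeff i) else if (i : ℕ) = (j : ℕ) + 1 then 1 else 0

lemma pow_card [Nontrivial S] (A : Matrix (Fin n) (Fin n) S) :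
    A ^ n = -∑ k ∈ Finset.range n, A.charpoly.coeff k • A ^ k := by
  have h := Matrix.aeval_self_charpoly A
  rw [Polynomial.aeval_eq_sum_range, Matrix.charpoly_natDegree_eq_dim, Fintype.card_fin,
    Finset.sum_range_succ] at h
  have hm : A.charpoly.coeff n = 1 := by
    have h1 := A.charpoly_monic.coeff_natDegree
    rwa [Matrix.charpoly_natDegree_eq_dim, Fintype.card_fin] at h1
  rw [hm, one_smul] at h
  exact eq_neg_of_add_eq_zero_right h

lemma mul_kry [NeZero n] [Nontrivial S] (A : Matrix (Fin n) (Fin n) S) :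
    A * kry A = kry A * cmp A := by
  have hn : 1 ≤ n := Nat.one_le_iff_ne_zero.mpr (NeZero.ne n)
  ext i j
  have hLHS : (A * kry A) i j = (A ^ ((j : ℕ) + 1)) i 0 := by
    rw [pow_succ', Matrix.mul_apply, Matrix.mul_apply]; rfl
  by_cases hj : (j : ℕ) = n - 1
  · have hj1 : (j : ℕ) + 1 = n := by omega
    rw [hLHS, hj1, Matrix.mul_apply, pow_card]
    have : ∀ k : Fin n, kry A i k * cmp A k j = (A ^ (k : ℕ)) i 0 * (-(A.charpoly.coeff k)) := by
      intro k; simp [kry, cmp, hj]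
    rw [Finset.sum_congr rfl fun k _ => this k]
    rw [Matrix.neg_apply, Matrix.sum_apply]
    rw [Fin.sum_univ_eq_sum_range (fun k => (A ^ k) i 0 * (-(A.charpoly.coeff k)))]
    rw [← Finset.sum_neg_distrib]
    apply Finset.sum_congr rfl
    intro k hk
    simp [Matrix.smul_apply, smul_eq_mul]
    ring
  · have hj1 : (j : ℕ) + 1 < n := by have := j.2; omega
    rw [hLHS, Matrix.mul_apply]
    rw [Finset.sum_eq_single (⟨(j : ℕ) + 1, hj1⟩ : Fin n)]
    · simp [kry, cmp, hj]
    · intro k _ hk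
      have : cmp A k j = 0 := by
        simp only [cmp, Matrix.of_apply, if_neg hj]
        rw [if_neg]
        intro h
        exact hk (Fin.ext h)
      rw [this, mul_zero]
    · intro h; exact absurd (Finset.mem_univ _) h

lemma infb_entry {x : Matrix (Fin n) (Fin n) ℂ} (hx : InFB x) {i j : Fin n} (h : j < i) :
    x i j = if (i : ℕ) = (j : ℕ) + 1 then 1 else 0 := by
  have := hx (show id j < id i from h)
  have hx2 : x i j = fMat n i j := by
    have := sub_eq_zero.mp (by simpa [Matrix.sub_apply] using this)
    exact this
  simpa [fMat] using hx2

lemma cmp_inFB (A : Matrix (Fin n) (Fin n) ℂ) : InFB (cmp A) := by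
  intro i j hij
  have hij' : (j : ℕ) < (i : ℕ) := hij
  have hj : (j : ℕ) ≠ n - 1 := by have := i.2; omega
  simp only [Matrix.sub_apply, cmp, fMat, Matrix.of_apply, if_neg hj]
  by_cases h : (i : ℕ) = (j : ℕ) + 1 <;> simp [h]

lemma kry_entry {x : Matrix (Fin n) (Fin n) ℂ} [NeZero n] (hx : InFB x) :
    ∀ (m : ℕ) (i : Fin n), m ≤ (i : ℕ) → (x ^ m) i 0 = if (i : ℕ) = m then 1 else 0 := by
  intro m
  induction m with
  | zero =>
    intro i _
    simp [Matrix.one_apply, ← Fin.val_eq_zero_iff]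
  | succ m ih =>
    intro i hi
    have hmn : m < n := by have := i.2; omega
    rw [pow_succ', Matrix.mul_apply]
    rw [Finset.sum_eq_single (⟨m, hmn⟩ : Fin n)]
    · rw [ih ⟨m, hmn⟩ le_rfl, if_pos rfl, mul_one]
      have hlt : (⟨m, hmn⟩ : Fin n) < i := by rw [Fin.lt_def]; simpa using hi
      rw [infb_entry hx hlt]
    · intro k _ hk
      by_cases hkm : m < (k : ℕ)
      · rw [ih k (by omega), if_neg (by omega), mul_zero]
      · have hki : (k : ℕ) < m := by
          rcases Nat.lt_or_ge (k : ℕ) m with h | h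
          · exact h
          · exact absurd (Fin.ext (by simp only [Fin.val_mk]; omega)) hk
        have hlt : k < i := by rw [Fin.lt_def]; omega
        rw [infb_entry hx hlt, if_neg (by omega), zero_mul]
    · intro h; exact absurd (Finset.mem_univ _) h

lemma kry_uniUpper {x : Matrix (Fin n) (Fin n) ℂ} [NeZero n] (hx : InFB x) :
    IsUniUpper (kry x) := by
  constructor
  · intro i j hij
    have hij' : (j : ℕ) < (i : ℕ) := hij
    simpa [kry] using (kry_entry hx j i (le_of_lt hij')).trans (if_neg (by omega))
  · intro i
    simpa [kry] using (kry_entry hx i i le_rfl).trans (if_pos rfl)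

lemma kry_det {x : Matrix (Fin n) (Fin n) ℂ} [NeZero n] (hx : InFB x) : (kry x).det = 1 := by
  rw [Matrix.det_of_upperTriangular (kry_uniUpper hx).1]
  simp [(kry_uniUpper hx).2]

lemma charpoly_conj (g : (Matrix (Fin n) (Fin n) S)ˣ) (A : Matrix (Fin n) (Fin n) S) :
    ((g : Matrix (Fin n) (Fin n) S) * A *
      ((g⁻¹ : (Matrix (Fin n) (Fin n) S)ˣ) : Matrix (Fin n) (Fin n) S)).charpoly
      = A.charpoly := by
  set f : Matrix (Fin n) (Fin n) S →+* Matrix (Fin n) (Fin n) S[X] :=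
    RingHom.mapMatrix (Polynomial.C : S →+* S[X]) with hf
  have hginv : f ↑g * f ↑g⁻¹ = 1 := by
    rw [← _root_.map_mul, Units.mul_inv, _root_.map_one]
  have hginv' : f ↑g⁻¹ * f ↑g = 1 := by
    rw [← _root_.map_mul, Units.inv_mul, _root_.map_one]
  have key : charmatrix ((g : Matrix (Fin n) (Fin n) S) * A *
        ((g⁻¹ : (Matrix (Fin n) (Fin n) S)ˣ) : Matrix (Fin n) (Fin n) S))
      = f ↑g * charmatrix A * f ↑g⁻¹ := by
    rw [charmatrix, charmatrix, mul_sub, sub_mul]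
    congr 1
    · have hc : Commute (Matrix.scalar (Fin n) (X : S[X])) (f ↑g) :=
        Matrix.scalar_commute _ (fun r => Commute.all _ _) _
      rw [← hc.eq, mul_assoc, hginv, mul_one]
    · rw [hf]
      simp only [RingHom.mapMatrix_apply]
      rw [← Matrix.map_mul, ← Matrix.map_mul]
  have h1 : ((g : Matrix (Fin n) (Fin n) S) * A *
      ((g⁻¹ : (Matrix (Fin n) (Fin n) S)ˣ) : Matrix (Fin n) (Fin n) S)).charpoly
      = (charmatrix ((g : Matrix (Fin n) (Fin n) S) * A *
      ((g⁻¹ : (Matrix (Fin n) (Fin n) S)ˣ) : Matrix (Fin n) (Fin n) S))).det := rfl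
  rw [h1, key, Matrix.det_mul, Matrix.det_mul, mul_comm, ← mul_assoc, ← Matrix.det_mul,
    hginv', Matrix.det_one, one_mul]
  rfl

lemma cmp_map (A : Matrix (Fin n) (Fin n) S) (f : S →+* T) :
    (cmp A).map f = cmp (A.map f) := by
  ext i j
  simp only [cmp, Matrix.map_apply, Matrix.of_apply, Matrix.charpoly_map, Polynomial.coeff_map,
    apply_ite f, map_neg, _root_.map_one, map_zero]

/-- The generic matrix whose entries are the variables. -/
noncomputable def genX (n : ℕ) : Matrix (Fin n) (Fin n) (MvPolynomial (Fin n × Fin n) ℂ) :=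
  Matrix.of fun i j => MvPolynomial.X (i, j)

lemma genX_map (A : Matrix (Fin n) (Fin n) ℂ) :
    (genX n).map (MvPolynomial.eval (fun q => A q.1 q.2)) = A := by
  ext i j
  simp [genX]

lemma kry_map [NeZero n] (A : Matrix (Fin n) (Fin n) S) (f : S →+* T) :
    (kry A).map f = kry (A.map f) := by
  ext i j
  simp only [kry, Matrix.map_apply, Matrix.of_apply]
  rw [← RingHom.mapMatrix_apply, ← map_pow, RingHom.mapMatrix_apply]
  rfl

lemma eval_eq_aeval (v : Fin n × Fin n → ℂ) (p : MvPolynomial (Fin n × Fin n) ℂ) :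
    MvPolynomial.eval v p = MvPolynomial.aeval v p := by
  rw [← MvPolynomial.coe_aeval_eq_eval]
  rfl

lemma evalMat_bind (P : MvPolynomial (Fin n × Fin n) ℂ) (B : Matrix (Fin n) (Fin n) ℂ) :
    evalMat (MvPolynomial.bind₁ (fun q : Fin n × Fin n => cmp (genX n) q.1 q.2) P) B
      = evalMat P (cmp B) := by
  unfold evalMat
  rw [eval_eq_aeval, MvPolynomial.aeval_bind₁]
  rw [eval_eq_aeval]
  have hfun : (fun q : Fin n × Fin n =>
        (MvPolynomial.aeval fun q : Fin n × Fin n => B q.1 q.2) (cmp (genX n) q.1 q.2))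
      = fun q : Fin n × Fin n => cmp B q.1 q.2 := by
    funext q
    rw [← eval_eq_aeval]
    have h0 : MvPolynomial.eval (fun q : Fin n × Fin n => B q.1 q.2) (cmp (genX n) q.1 q.2)
        = ((cmp (genX n)).map (MvPolynomial.eval (fun q : Fin n × Fin n => B q.1 q.2))) q.1 q.2 :=
      rfl
    rw [h0, cmp_map, genX_map]
  rw [hfun]

lemma eval_kry_det [NeZero n] (A : Matrix (Fin n) (Fin n) ℂ) :
    MvPolynomial.eval (fun q => A q.1 q.2) (kry (genX n)).det = (kry A).det := by
  rw [RingHom.map_det, RingHom.mapMatrix_apply, kry_map, genX_map]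

lemma conj_of_mul_eq {x C : Matrix (Fin n) (Fin n) S} (u : (Matrix (Fin n) (Fin n) S)ˣ)
    (h : x * (u : Matrix (Fin n) (Fin n) S) = (u : Matrix (Fin n) (Fin n) S) * C) :
    x = (u : Matrix (Fin n) (Fin n) S) * C *
      ((u⁻¹ : (Matrix (Fin n) (Fin n) S)ˣ) : Matrix (Fin n) (Fin n) S) := by
  calc x = x * ((u : Matrix (Fin n) (Fin n) S) *
        ((u⁻¹ : (Matrix (Fin n) (Fin n) S)ˣ) : Matrix (Fin n) (Fin n) S)) := by
        rw [u.mul_inv, mul_one]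
    _ = x * (u : Matrix (Fin n) (Fin n) S) *
        ((u⁻¹ : (Matrix (Fin n) (Fin n) S)ˣ) : Matrix (Fin n) (Fin n) S) := by rw [mul_assoc]
    _ = _ := by rw [h]

end KostantAux

/-- The restriction map from conjugation-invariant polynomial functions on
`Matₙ(ℂ)` to `N`-invariant polynomial functions on `f + b` is bijective:
(1) a conjugation-invariant polynomial function vanishing on `f + b` vanishes
identically; (2) every `N`-invariant polynomial function on `f + b` is the
restriction of a conjugation-invariant polynomial function on `Matₙ(ℂ)`. -/
theorem invariant_polynomials_restrict_iso_fb (n : ℕ) (hn : 1 ≤ n) :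
    (∀ P : MvPolynomial (Fin n × Fin n) ℂ,
      (∀ (g : (Matrix (Fin n) (Fin n) ℂ)ˣ) (A : Matrix (Fin n) (Fin n) ℂ),
        evalMat P ((g : Matrix (Fin n) (Fin n) ℂ) * A *
          ((g⁻¹ : (Matrix (Fin n) (Fin n) ℂ)ˣ) : Matrix (Fin n) (Fin n) ℂ)) = evalMat P A) →
      (∀ x : Matrix (Fin n) (Fin n) ℂ, InFB x → evalMat P x = 0) →
      ∀ A : Matrix (Fin n) (Fin n) ℂ, evalMat P A = 0) ∧
    (∀ P : MvPolynomial (Fin n × Fin n) ℂ,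
      (∀ (u : (Matrix (Fin n) (Fin n) ℂ)ˣ) (x : Matrix (Fin n) (Fin n) ℂ),
        IsUniUpper (u : Matrix (Fin n) (Fin n) ℂ) → InFB x →
        evalMat P ((u : Matrix (Fin n) (Fin n) ℂ) * x *
          ((u⁻¹ : (Matrix (Fin n) (Fin n) ℂ)ˣ) : Matrix (Fin n) (Fin n) ℂ)) = evalMat P x) →
      ∃ Q : MvPolynomial (Fin n × Fin n) ℂ,
        (∀ (g : (Matrix (Fin n) (Fin n) ℂ)ˣ) (A : Matrix (Fin n) (Fin n) ℂ),
          evalMat Q ((g : Matrix (Fin n) (Fin n) ℂ) * A *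
            ((g⁻¹ : (Matrix (Fin n) (Fin n) ℂ)ˣ) : Matrix (Fin n) (Fin n) ℂ)) = evalMat Q A) ∧
        ∀ x : Matrix (Fin n) (Fin n) ℂ, InFB x → evalMat Q x = evalMat P x) := by
  haveI : NeZero n := ⟨by omega⟩
  constructor
  · intro P hinv hvan
    have hP : P * (KostantAux.kry (KostantAux.genX n)).det = 0 := by
      apply MvPolynomial.funext
      intro v
      rw [_root_.map_mul, map_zero]
      set A : Matrix (Fin n) (Fin n) ℂ := Matrix.of fun i j => v (i, j) with hA
      have hv : v = fun q => A q.1 q.2 := by funext q; simp [hA]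
      rw [hv, KostantAux.eval_kry_det]
      by_cases hdet : IsUnit (KostantAux.kry A).det
      · obtain ⟨u, hu⟩ := (Matrix.isUnit_iff_isUnit_det _).mpr hdet
        have hAeq := KostantAux.conj_of_mul_eq (C := KostantAux.cmp A) u
          (by rw [hu]; exact KostantAux.mul_kry A)
        have hval : MvPolynomial.eval (fun q => A q.1 q.2) P = evalMat P A := rfl
        rw [hval, hAeq, hinv u (KostantAux.cmp A), hvan _ (KostantAux.cmp_inFB A), zero_mul]
      · rw [isUnit_iff_ne_zero, not_not] at hdet
        rw [hdet, mul_zero]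
    have hD0 : (KostantAux.kry (KostantAux.genX n)).det ≠ 0 := by
      intro h
      have hfb : InFB (fMat n) := by
        intro i j hij
        simp [Matrix.sub_apply]
      have h1 : MvPolynomial.eval (fun q => fMat n q.1 q.2)
          (KostantAux.kry (KostantAux.genX n)).det = 1 := by
        rw [KostantAux.eval_kry_det, KostantAux.kry_det hfb]
      rw [h] at h1
      simp at h1
    have hP0 : P = 0 := by
      rcases mul_eq_zero.mp hP with h | h
      · exact h
      · exact absurd h hD0
    intro A
    rw [hP0]
    simp [evalMat]
  · intro P hNinv
    refine ⟨MvPolynomial.bind₁ (fun q : Fin n × Fin n =>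
      KostantAux.cmp (KostantAux.genX n) q.1 q.2) P, ?_, ?_⟩
    · intro g A
      rw [KostantAux.evalMat_bind, KostantAux.evalMat_bind]
      congr 1
      unfold KostantAux.cmp
      rw [KostantAux.charpoly_conj]
    · intro x hx
      rw [KostantAux.evalMat_bind]
      have hdet : IsUnit (KostantAux.kry x).det := by
        rw [KostantAux.kry_det hx]; exact isUnit_one
      obtain ⟨u, hu⟩ := (Matrix.isUnit_iff_isUnit_det _).mpr hdet
      have hxeq := KostantAux.conj_of_mul_eq (C := KostantAux.cmp x) u
        (by rw [hu]; exact KostantAux.mul_kry x)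
      have huni : IsUniUpper (↑u : Matrix (Fin n) (Fin n) ℂ) := by
        rw [hu]; exact KostantAux.kry_uniUpper hx
      have hres := hNinv u (KostantAux.cmp x) huni (KostantAux.cmp_inFB x)
      rw [← hxeq] at hres
      rw [hres]
end

section
/- Let n ≥ 1, let f ∈ Matₙ(ℂ) be the matrix with (i+1,i) entry 1 for 1 ≤ i ≤ n−1 and all other entries 0, and let a ⊆ Matₙ(ℂ) be the subspace of matrices all of whose entries outside the last column are 0. Then Matₙ(ℂ) = a + [Matₙ(ℂ), f]: every A ∈ Matₙ(ℂ) can be written A = B + (Cf − fC) with B ∈ a and C ∈ Matₙ(ℂ). -/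
open Matrix

private def Aext {n : ℕ} (A : Matrix (Fin n) (Fin n) ℂ) (i j : ℕ) : ℂ :=
  if h : i < n ∧ j < n then A ⟨i, h.1⟩ ⟨j, h.2⟩ else 0

private def gC {n : ℕ} (A : Matrix (Fin n) (Fin n) ℂ) : ℕ → ℕ → ℂ
  | _, 0 => 0
  | 0, k+1 => Aext A 0 k
  | i+1, k+1 => Aext A (i+1) k + gC A i k

/-- `Matₙ(ℂ) = a + [Matₙ(ℂ), f]`, where `a` is the subspace of matrices supported
in the last column: every matrix `A` can be written `A = B + (C f − f C)` with
`B ∈ a` and `C` arbitrary. -/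
theorem matrix_eq_lastColumn_add_bracket_f (n : ℕ) (hn : 1 ≤ n)
    (A : Matrix (Fin n) (Fin n) ℂ) :
    ∃ B C : Matrix (Fin n) (Fin n) ℂ,
      (∀ i j : Fin n, (j : ℕ) + 1 ≠ n → B i j = 0) ∧
      A = B + (C * fMat n - fMat n * C) := by
  set C : Matrix (Fin n) (Fin n) ℂ := Matrix.of fun i j => gC A (i : ℕ) (j : ℕ) with hC
  refine ⟨A - (C * fMat n - fMat n * C), C, ?_, by abel⟩
  intro i j hj
  have hj' : (j : ℕ) + 1 < n := lt_of_le_of_ne j.isLt hj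
  -- compute (C * f) i j
  have h1 : (C * fMat n) i j = gC A (i : ℕ) ((j : ℕ) + 1) := by
    simp only [Matrix.mul_apply, fMat, Matrix.of_apply]
    rw [Finset.sum_eq_single (⟨(j : ℕ) + 1, hj'⟩ : Fin n)]
    · simp [hC]
    · intro k _ hk
      have : (k : ℕ) ≠ (j : ℕ) + 1 := fun h => hk (Fin.ext h)
      simp [this]
    · simp
  have h2 : (fMat n * C) i j =
      (if (i : ℕ) = 0 then 0 else gC A ((i : ℕ) - 1) (j : ℕ)) := by
    simp only [Matrix.mul_apply, fMat, Matrix.of_apply]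
    rcases Nat.eq_zero_or_eq_succ_pred (i : ℕ) with h0 | h0
    · rw [h0]
      apply Finset.sum_eq_zero
      intro k _
      simp [h0]
    · have him : (i : ℕ) - 1 < n := lt_of_le_of_lt (Nat.sub_le _ _) i.isLt
      rw [Finset.sum_eq_single (⟨(i : ℕ) - 1, him⟩ : Fin n)]
      · simp only [hC, Matrix.of_apply]
        rw [if_pos (by omega : (i : ℕ) = (i : ℕ) - 1 + 1),
          if_neg (by omega : ¬ (i : ℕ) = 0), one_mul]
      · intro k _ hk
        have : (i : ℕ) ≠ (k : ℕ) + 1 := by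
          intro h
          exact hk (Fin.ext (by simp only [Fin.val_mk]; omega))
        simp [this]
      · simp
  simp only [Matrix.sub_apply, h1, h2]
  rcases Nat.eq_zero_or_eq_succ_pred (i : ℕ) with h0 | h0
  · rw [h0, if_pos rfl, sub_zero]
    show A i j - Aext A 0 (j : ℕ) = 0
    simp only [Aext]
    rw [dif_pos ⟨hn, j.isLt⟩]
    have h1 : (⟨0, hn⟩ : Fin n) = i := Fin.ext h0.symm
    rw [h1, Fin.eta, sub_self]
  · set m := (i : ℕ) - 1 with hm
    have hi : (i : ℕ) = m + 1 := by omega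
    rw [hi, if_neg (Nat.succ_ne_zero m)]
    rw [show gC A (m + 1) ((j : ℕ) + 1) = Aext A (m + 1) (j : ℕ) + gC A m (j : ℕ) from rfl]
    have hin : m + 1 < n := hi ▸ i.isLt
    simp only [Aext]
    rw [dif_pos ⟨hin, j.isLt⟩]
    have h3 : (⟨m + 1, hin⟩ : Fin n) = i := Fin.ext hi.symm
    rw [h3, Fin.eta]
    ring
end

section
/- Let n ≥ 1, let f ∈ Matₙ(ℂ) be the matrix with (i+1,i) entry 1 for 1 ≤ i ≤ n−1 and all other entries 0, and let b ⊆ Matₙ(ℂ) be the subspace of upper triangular matrices. For every x ∈ f + b, the affine space f + b intersects the conjugation orbit of x transversally at x: Matₙ(ℂ) = b + [Matₙ(ℂ), x], i.e. every A ∈ Matₙ(ℂ) can be written A = B + (Cx − xC) with B ∈ b and C ∈ Matₙ(ℂ). -/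
open Matrix

lemma fb_aux (n : ℕ) (x : Matrix (Fin n) (Fin n) ℂ)
    (hxl : ∀ i j : Fin n, (j : ℕ) < (i : ℕ) →
      x i j = if (i : ℕ) = (j : ℕ) + 1 then 1 else 0) :
    ∀ d : ℕ, ∀ A : Matrix (Fin n) (Fin n) ℂ,
      (∀ i j : Fin n, (j : ℕ) + d < (i : ℕ) → A i j = 0) →
      ∃ C : Matrix (Fin n) (Fin n) ℂ, (A - (C * x - x * C)).BlockTriangular id := by
  intro d
  induction d with
  | zero =>
    intro A hA
    refine ⟨0, ?_⟩
    intro i j hij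
    simp only [zero_mul, mul_zero, sub_zero, Matrix.sub_apply, Matrix.zero_apply]
    have : A i j = 0 := hA i j (by simpa using hij)
    simp [this]
  | succ d ih =>
    intro A hA
    set g : ℕ → ℂ := fun t =>
      if h : t + d + 1 < n then A ⟨t + d + 1, h⟩ ⟨t, by omega⟩ else 0 with hg
    set C : Matrix (Fin n) (Fin n) ℂ := Matrix.of fun i j =>
      if (i : ℕ) = (j : ℕ) + d then (∑ t ∈ Finset.range (j : ℕ), g t) else 0 with hC
    have hP : ∀ i j : Fin n, (j : ℕ) + d < (i : ℕ) → (A - (C * x - x * C)) i j = 0 := by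
      intro i j h
      rcases eq_or_lt_of_le (Nat.succ_le_of_lt h) with hij | hij
      · -- i = j + d + 1
        have hij' : (i : ℕ) = (j : ℕ) + d + 1 := hij.symm
        have hj1 : (j : ℕ) + 1 < n := by have := i.isLt; omega
        have hjd : (j : ℕ) + d < n := by have := i.isLt; omega
        have e1 : (C * x) i j = ∑ t ∈ Finset.range ((j : ℕ) + 1), g t := by
          rw [Matrix.mul_apply]
          rw [Finset.sum_eq_single (⟨(j : ℕ) + 1, hj1⟩ : Fin n)]
          · have h1 : C i ⟨(j : ℕ) + 1, hj1⟩ = ∑ t ∈ Finset.range ((j : ℕ) + 1), g t := by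
              simp only [hC, Matrix.of_apply]
              rw [if_pos (by simpa using by omega)]
            have h2 : x ⟨(j : ℕ) + 1, hj1⟩ j = 1 := by
              rw [hxl _ _ (by simp)]
              simp
            rw [h1, h2, mul_one]
          · intro k _ hk
            have hne : (i : ℕ) ≠ (k : ℕ) + d := by
              intro hkk
              apply hk
              apply Fin.ext
              simp only
              omega
            simp only [hC, Matrix.of_apply]
            rw [if_neg hne, zero_mul]
          · intro habs; exact absurd (Finset.mem_univ _) habs
        have e2 : (x * C) i j = ∑ t ∈ Finset.range (j : ℕ), g t := by
          rw [Matrix.mul_apply]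
          rw [Finset.sum_eq_single (⟨(j : ℕ) + d, hjd⟩ : Fin n)]
          · have h1 : C ⟨(j : ℕ) + d, hjd⟩ j = ∑ t ∈ Finset.range (j : ℕ), g t := by
              simp only [hC, Matrix.of_apply]
              rw [if_pos (by simp)]
            have h2 : x i ⟨(j : ℕ) + d, hjd⟩ = 1 := by
              rw [hxl _ _ (by simp only; omega)]
              rw [if_pos (by simp only; omega)]
            rw [h1, h2, one_mul]
          · intro k _ hk
            have hne : (k : ℕ) ≠ (j : ℕ) + d := by
              intro hkk
              apply hk
              apply Fin.ext
              simpa using hkk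
            simp only [hC, Matrix.of_apply]
            rw [if_neg hne, mul_zero]
          · intro habs; exact absurd (Finset.mem_univ _) habs
        have e3 : g (j : ℕ) = A i j := by
          rw [hg]
          simp only
          rw [dif_pos (by omega)]
          congr 1 <;> exact Fin.ext (by simp only; omega)
        simp only [Matrix.sub_apply, e1, e2, Finset.sum_range_succ, e3]
        ring
      · -- i > j + d + 1
        have e1 : (C * x) i j = 0 := by
          rw [Matrix.mul_apply]
          apply Finset.sum_eq_zero
          intro k _
          by_cases hk : (i : ℕ) = (k : ℕ) + d
          · have hkj : (j : ℕ) < (k : ℕ) := by omega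
            have : x k j = 0 := by
              rw [hxl _ _ hkj, if_neg (by omega)]
            rw [this, mul_zero]
          · simp only [hC, Matrix.of_apply]
            rw [if_neg hk, zero_mul]
        have e2 : (x * C) i j = 0 := by
          rw [Matrix.mul_apply]
          apply Finset.sum_eq_zero
          intro k _
          by_cases hk : (k : ℕ) = (j : ℕ) + d
          · have : x i k = 0 := by
              rw [hxl _ _ (by omega), if_neg (by omega)]
            rw [this, zero_mul]
          · simp only [hC, Matrix.of_apply]
            rw [if_neg hk, mul_zero]
        have e3 : A i j = 0 := hA i j (by omega)
        simp [Matrix.sub_apply, e1, e2, e3]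
    obtain ⟨C', hC'⟩ := ih (A - (C * x - x * C)) hP
    refine ⟨C + C', ?_⟩
    have heq : A - ((C + C') * x - x * (C + C')) =
        (A - (C * x - x * C)) - (C' * x - x * C') := by
      rw [add_mul, mul_add]
      abel
    rw [heq]
    exact hC'

/-- For every `x ∈ f + b`, the affine space `f + b` meets the conjugation orbit of
`x` transversally at `x`: `Matₙ(ℂ) = b + [Matₙ(ℂ), x]`, i.e. every matrix `A`
can be written `A = B + (C x − x C)` with `B` upper triangular. -/
theorem fb_transversal_to_orbits (n : ℕ) (hn : 1 ≤ n)
    (x : Matrix (Fin n) (Fin n) ℂ) (hx : (x - fMat n).BlockTriangular id)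
    (A : Matrix (Fin n) (Fin n) ℂ) :
    ∃ B C : Matrix (Fin n) (Fin n) ℂ,
      B.BlockTriangular id ∧ A = B + (C * x - x * C) := by
  have hxl : ∀ i j : Fin n, (j : ℕ) < (i : ℕ) →
      x i j = if (i : ℕ) = (j : ℕ) + 1 then 1 else 0 := by
    intro i j hij
    have h0 : (x - fMat n) i j = 0 := hx (show (id j : Fin n) < id i from hij)
    have : x i j = fMat n i j := by
      have := sub_eq_zero.mp (by simpa [Matrix.sub_apply] using h0)
      exact this
    rw [this]
    rfl
  obtain ⟨C, hC⟩ := fb_aux n x hxl n A (fun i j hij => absurd i.isLt (by omega))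
  exact ⟨A - (C * x - x * C), C, hC, by abel⟩
end

section
/- Let n ≥ 1 and let a ⊆ Matₙ(ℂ) be the subspace of matrices all of whose entries outside the last column are 0. For every companion matrix x, the set S of companion matrices intersects the conjugation orbit of x transversally at x: Matₙ(ℂ) = a + [Matₙ(ℂ), x], i.e. every A ∈ Matₙ(ℂ) can be written A = B + (Cx − xC) with B ∈ a and C ∈ Matₙ(ℂ). -/
open Matrix

/-- Columns of the matrix `C`, built recursively. -/
noncomputable def colAux (n : ℕ) (x A : Matrix (Fin n) (Fin n) ℂ) : ℕ → Fin n → ℂ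
  | 0 => 0
  | j + 1 => fun i =>
      (if h : j < n then A i ⟨j, h⟩ else 0) + ∑ k, x i k * colAux n x A j k

/-- For every companion matrix `x`, the set `S` of companion matrices meets the
conjugation orbit of `x` transversally at `x`: `Matₙ(ℂ) = a + [Matₙ(ℂ), x]`,
where `a` is the subspace of matrices supported in the last column: every matrix
`A` can be written `A = B + (C x − x C)` with `B ∈ a`. -/
theorem companion_slice_transversal_to_orbits (n : ℕ) (hn : 1 ≤ n)
    (x : Matrix (Fin n) (Fin n) ℂ) (hx : IsCompanion x)
    (A : Matrix (Fin n) (Fin n) ℂ) :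
    ∃ B C : Matrix (Fin n) (Fin n) ℂ,
      (∀ i j : Fin n, (j : ℕ) + 1 ≠ n → B i j = 0) ∧
      A = B + (C * x - x * C) := by
  classical
  set C : Matrix (Fin n) (Fin n) ℂ := fun i j => colAux n x A (j : ℕ) i with hC
  refine ⟨A - (C * x - x * C), C, ?_, by abel⟩
  intro i j hj
  have hj' : (j : ℕ) + 1 < n := lt_of_le_of_ne (Nat.succ_le_of_lt j.isLt) hj
  have hCx : (C * x) i j = C i ⟨(j : ℕ) + 1, hj'⟩ := by
    rw [Matrix.mul_apply]
    rw [Finset.sum_eq_single (⟨(j : ℕ) + 1, hj'⟩ : Fin n)]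
    · rw [(hx _ j hj').1 rfl, mul_one]
    · intro k _ hk
      rw [(hx k j hj').2 (by
        intro h
        exact hk (Fin.ext h)), mul_zero]
    · intro h
      exact absurd (Finset.mem_univ _) h
  have hxC : (x * C) i j = ∑ k, x i k * colAux n x A (j : ℕ) k := by
    rw [Matrix.mul_apply]
  have hCval : C i ⟨(j : ℕ) + 1, hj'⟩ = A i j + ∑ k, x i k * colAux n x A (j : ℕ) k := by
    show colAux n x A ((j : ℕ) + 1) i = _
    rw [colAux]
    simp only [dif_pos j.isLt, Fin.eta]
  simp only [Matrix.sub_apply]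
  rw [hCx, hCval, ← hxC]
  ring
end

section
/- Let n ≥ 1. The map θ_χ : n → U(glₙ(ℂ)) ⊗ Cl defined by θ_χ(x) = (ι_U(x) − χ(x)·1) ⊗ 1 + 1 ⊗ ρ(x) is a Lie algebra homomorphism for the commutator bracket: θ_χ(x)θ_χ(y) − θ_χ(y)θ_χ(x) = θ_χ([x,y]) for all x, y ∈ n. -/
open Matrix

attribute [local instance 100] LieRing.ofAssociativeRing
attribute [local instance 100] LieAlgebra.ofAssociativeAlgebra

noncomputable section

/-- The subspace `n` of strictly upper triangular `n×n` complex matrices. -/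
def strictUpper (n : ℕ) : Submodule ℂ (Matrix (Fin n) (Fin n) ℂ) where
  carrier := {M | ∀ i j : Fin n, j ≤ i → M i j = 0}
  add_mem' := by
    intro A B hA hB i j hij
    simp [Matrix.add_apply, hA i j hij, hB i j hij]
  zero_mem' := by intro i j _; rfl
  smul_mem' := by
    intro c A hA i j hij
    simp [Matrix.smul_apply, hA i j hij]

/-- The underlying module `n ⊕ n*` of the Clifford algebra. -/
abbrev ClModule (n : ℕ) :=
  (strictUpper n) × Module.Dual ℂ (strictUpper n)

/-- The bilinear form `((x,φ),(y,ψ)) ↦ φ(y)` on `n ⊕ n*`. -/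
def clBilin (n : ℕ) : ClModule n →ₗ[ℂ] ClModule n →ₗ[ℂ] ℂ :=
  LinearMap.mk₂ ℂ (fun p q => p.2 q.1)
    (fun p p' q => by simp)
    (fun c p q => by simp)
    (fun p q q' => by simp)
    (fun c p q => by simp)

/-- The quadratic form `Q(x, φ) = φ(x)` on `n ⊕ n*`, whose polar form is
`((x,φ),(y,ψ)) ↦ φ(y) + ψ(x)`. -/
def clQ (n : ℕ) : QuadraticForm ℂ (ClModule n) :=
  LinearMap.BilinMap.toQuadraticMap (clBilin n)

/-- The Clifford algebra of `n ⊕ n*`. -/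
abbrev Cl (n : ℕ) := CliffordAlgebra (clQ n)

/-- The canonical embedding `ι : n ⊕ n* → Cl`. -/
def clι (n : ℕ) : ClModule n →ₗ[ℂ] Cl n := CliffordAlgebra.ι (clQ n)

/-- The projection of a matrix onto its strictly upper triangular part, as a
linear map to `n`. It is the identity on strictly upper triangular matrices. -/
def strictUpperPart (n : ℕ) : Matrix (Fin n) (Fin n) ℂ →ₗ[ℂ] strictUpper n where
  toFun := fun M =>
    ⟨Matrix.of fun i j => if i < j then M i j else 0, by
      intro i j hij
      simp only [Matrix.of_apply]
      exact if_neg (not_lt.mpr hij)⟩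
  map_add' := by
    intro A B
    apply Subtype.ext
    funext i j
    simp only [Matrix.of_apply, Submodule.coe_add, Matrix.add_apply]
    split <;> simp
  map_smul' := by
    intro c A
    apply Subtype.ext
    funext i j
    simp only [Matrix.of_apply, SetLike.val_smul, Matrix.smul_apply, RingHom.id_apply]
    split <;> simp

/-- The index set `Δ₊ = {(i,j) : i < j}` of the basis of matrix units of `n`. -/
abbrev DeltaP (n : ℕ) := {p : Fin n × Fin n // p.1 < p.2}

/-- The basis element `e_{ij} ∈ n` (matrix unit), for `(i,j) ∈ Δ₊`. -/
def eBasis {n : ℕ} (p : DeltaP n) : strictUpper n :=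
  ⟨Matrix.single p.1.1 p.1.2 1, by
    intro i j hij
    rw [Matrix.single]
    simp only [Matrix.of_apply, ite_eq_right_iff, one_ne_zero, imp_false, not_and]
    intro h1 h2
    exact absurd (h1 ▸ h2 ▸ p.2) (not_lt.mpr hij)⟩

/-- The dual basis element `e*_{ij} ∈ n*`: the coordinate functional picking out
the `(i,j)` entry. -/
def eDual {n : ℕ} (p : DeltaP n) : Module.Dual ℂ (strictUpper n) where
  toFun := fun x => (x : Matrix (Fin n) (Fin n) ℂ) p.1.1 p.1.2
  map_add' := by intro x y; simp
  map_smul' := by intro c x; simp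

/-- The map `ρ : n → Cl`, `ρ(x) = Σ_{i<j} ι([x, e_{ij}], 0) ι(0, e*_{ij})`. -/
def clρ (n : ℕ) (x : Matrix (Fin n) (Fin n) ℂ) : Cl n :=
  ∑ p : DeltaP n,
    clι n (strictUpperPart n (x * (eBasis p : Matrix (Fin n) (Fin n) ℂ)
        - (eBasis p : Matrix (Fin n) (Fin n) ℂ) * x), 0) *
      clι n (0, eDual p)

open scoped TensorProduct

/-- The character `χ(x) = tr(f x)` of `n`. -/
def chiFn (n : ℕ) (x : Matrix (Fin n) (Fin n) ℂ) : ℂ :=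
  Matrix.trace (fMat n * x)

/-- The tensor algebra `U(glₙ(ℂ)) ⊗ Cl`. -/
abbrev UCl (n : ℕ) :=
  UniversalEnvelopingAlgebra ℂ (Matrix (Fin n) (Fin n) ℂ) ⊗[ℂ] Cl n

/-- The map `θ_χ : n → U(glₙ(ℂ)) ⊗ Cl`,
`θ_χ(x) = (ι_U(x) − χ(x)·1) ⊗ 1 + 1 ⊗ ρ(x)`. -/
def thetaChi (n : ℕ) (x : Matrix (Fin n) (Fin n) ℂ) : UCl n :=
  (UniversalEnvelopingAlgebra.ι ℂ x -
      algebraMap ℂ (UniversalEnvelopingAlgebra ℂ (Matrix (Fin n) (Fin n) ℂ)) (chiFn n x))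
    ⊗ₜ[ℂ] (1 : Cl n) +
  (1 : UniversalEnvelopingAlgebra ℂ (Matrix (Fin n) (Fin n) ℂ)) ⊗ₜ[ℂ] clρ n x

namespace ThetaAux

variable {n : ℕ}

lemma mul_mem_strictUpper {A B : Matrix (Fin n) (Fin n) ℂ}
    (hA : A ∈ strictUpper n) (hB : B ∈ strictUpper n) : A * B ∈ strictUpper n := by
  intro i j hij
  rw [Matrix.mul_apply]
  apply Finset.sum_eq_zero
  intro k _
  by_cases hk : i < k
  · rw [hB k j (le_trans hij hk.le), mul_zero]
  · rw [hA i k (not_lt.mp hk), zero_mul]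

lemma brk_mem {x M : Matrix (Fin n) (Fin n) ℂ}
    (hx : x ∈ strictUpper n) (hM : M ∈ strictUpper n) : x * M - M * x ∈ strictUpper n :=
  Submodule.sub_mem _ (mul_mem_strictUpper hx hM) (mul_mem_strictUpper hM hx)

lemma sup_coe {M : Matrix (Fin n) (Fin n) ℂ} (hM : M ∈ strictUpper n) :
    ((strictUpperPart n M : strictUpper n) : Matrix (Fin n) (Fin n) ℂ) = M := by
  funext i j
  show (if i < j then M i j else 0) = M i j
  split
  · rfl
  · exact (hM i j (not_lt.mp (by assumption))).symm

lemma expand_basis (v : strictUpper n) : ∑ p : DeltaP n, eDual p v • eBasis p = v := by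
  apply Subtype.ext
  rw [Submodule.coe_sum]
  funext i j
  rw [Matrix.sum_apply]
  by_cases h : i < j
  · rw [Finset.sum_eq_single (⟨(i, j), h⟩ : DeltaP n)]
    · simp [eDual, eBasis, Matrix.single]
      rfl
    · intro b _ hb
      simp only [SetLike.val_smul, Matrix.smul_apply, eBasis, Matrix.single,
        Matrix.of_apply, smul_eq_mul]
      rw [if_neg, mul_zero]
      rintro ⟨h1, h2⟩
      exact hb (Subtype.ext (Prod.ext h1 h2))
    · intro h'; exact absurd (Finset.mem_univ _) h'
  · rw [v.2 i j (not_lt.mp h)]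
    apply Finset.sum_eq_zero
    intro p _
    simp only [SetLike.val_smul, Matrix.smul_apply, eBasis, Matrix.single,
      Matrix.of_apply, smul_eq_mul]
    rw [if_neg, mul_zero]
    rintro ⟨h1, h2⟩
    exact h (h1 ▸ h2 ▸ p.2)

end ThetaAux
namespace ThetaAux

variable {n : ℕ}

/-- `a_p = ι(e_p, 0)`. -/
def aE (p : DeltaP n) : Cl n := clι n (eBasis p, 0)

/-- `b_p = ι(0, e*_p)`. -/
def bE (p : DeltaP n) : Cl n := clι n (0, eDual p)

lemma clQ_apply (v : ClModule n) : clQ n v = v.2 v.1 := rfl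

lemma polar_eq (v w : ClModule n) :
    QuadraticMap.polar (⇑(clQ n)) v w = v.2 w.1 + w.2 v.1 := by
  simp only [QuadraticMap.polar, clQ_apply, Prod.snd_add, Prod.fst_add, LinearMap.add_apply,
    map_add]
  ring

lemma eDual_eBasis (q p : DeltaP n) : eDual q (eBasis p) = if p = q then 1 else 0 := by
  rcases p with ⟨⟨i, j⟩, hij⟩; rcases q with ⟨⟨k, l⟩, hkl⟩
  show Matrix.single i j (1 : ℂ) k l = _
  simp only [Matrix.single, Matrix.of_apply, Subtype.mk.injEq, Prod.mk.injEq]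

lemma aa (p q : DeltaP n) : aE p * aE q = -(aE q * aE p) := by
  have h := CliffordAlgebra.ι_mul_ι_add_swap (Q := clQ n) (eBasis p, 0) (eBasis q, 0)
  rw [polar_eq] at h
  simp only [LinearMap.zero_apply, add_zero, map_zero] at h
  exact eq_neg_of_add_eq_zero_left h

lemma bb (p q : DeltaP n) : bE p * bE q = -(bE q * bE p) := by
  have h := CliffordAlgebra.ι_mul_ι_add_swap (Q := clQ n) (0, eDual p) (0, eDual q)
  rw [polar_eq] at h
  simp only [map_zero, add_zero, zero_add] at h
  exact eq_neg_of_add_eq_zero_left h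

lemma ab (p q : DeltaP n) :
    aE p * bE q + bE q * aE p = algebraMap ℂ (Cl n) (if p = q then 1 else 0) := by
  have h := CliffordAlgebra.ι_mul_ι_add_swap (Q := clQ n) (eBasis p, 0) (0, eDual q)
  rw [polar_eq] at h
  simpa [eDual_eBasis, aE, bE, clι] using h

end ThetaAux
namespace ThetaAux

variable {n : ℕ}

/-- The (truncated) adjoint action of `x` on `n`. -/
def adL (x : Matrix (Fin n) (Fin n) ℂ) : strictUpper n →ₗ[ℂ] strictUpper n :=
  (strictUpperPart n) ∘ₗ
    ((LinearMap.mulLeft ℂ x - LinearMap.mulRight ℂ x) ∘ₗ (strictUpper n).subtype)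

lemma adL_apply (x : Matrix (Fin n) (Fin n) ℂ) (v : strictUpper n) :
    adL x v = strictUpperPart n (x * (v : Matrix (Fin n) (Fin n) ℂ) - (v : Matrix (Fin n) (Fin n) ℂ) * x) := rfl

lemma adL_coe {x : Matrix (Fin n) (Fin n) ℂ} (hx : x ∈ strictUpper n) (v : strictUpper n) :
    ((adL x v : strictUpper n) : Matrix (Fin n) (Fin n) ℂ) = x * (v : Matrix (Fin n) (Fin n) ℂ) - (v : Matrix (Fin n) (Fin n) ℂ) * x :=
  sup_coe (brk_mem hx v.2)

lemma adL_comm {x y : Matrix (Fin n) (Fin n) ℂ} (hx : x ∈ strictUpper n)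
    (hy : y ∈ strictUpper n) (v : strictUpper n) :
    adL x (adL y v) - adL y (adL x v) = adL (x * y - y * x) v := by
  have hxy : x * y - y * x ∈ strictUpper n :=
    Submodule.sub_mem _ (mul_mem_strictUpper hx hy) (mul_mem_strictUpper hy hx)
  apply Subtype.ext
  rw [AddSubgroupClass.coe_sub, adL_coe hx, adL_coe hy, adL_coe hy, adL_coe hx, adL_coe hxy]
  noncomm_ring

/-- matrix coefficients of `adL x` in the basis `eBasis`. -/
def cf (x : Matrix (Fin n) (Fin n) ℂ) (q p : DeltaP n) : ℂ := eDual q (adL x (eBasis p))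

/-- the injection `v ↦ ι(v,0)`. -/
def ja : strictUpper n →ₗ[ℂ] Cl n :=
  (clι n) ∘ₗ LinearMap.inl ℂ (strictUpper n) (Module.Dual ℂ (strictUpper n))

lemma clρ_eq (x : Matrix (Fin n) (Fin n) ℂ) :
    clρ n x = ∑ z : DeltaP n × DeltaP n, cf x z.1 z.2 • (aE z.1 * bE z.2) := by
  rw [Fintype.sum_prod_type, Finset.sum_comm]
  unfold clρ
  refine Finset.sum_congr rfl fun p _ => ?_
  show ja (adL x (eBasis p)) * bE p = _
  conv_lhs => rw [← expand_basis (adL x (eBasis p))]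
  rw [map_sum, Finset.sum_mul]
  exact Finset.sum_congr rfl fun q _ => by rw [_root_.map_smul, smul_mul_assoc]; rfl

lemma swap4 (q p s r : DeltaP n) :
    aE s * (aE q * (bE r * bE p)) = aE q * (aE s * (bE p * bE r)) := by
  rw [show aE s * (aE q * (bE r * bE p)) = (aE s * aE q) * (bE r * bE p) from
      (mul_assoc _ _ _).symm, aa, bb, neg_mul_neg, mul_assoc]

lemma mono (q p s r : DeltaP n) :
    (aE q * bE p) * (aE s * bE r)
      = (if s = p then (1 : ℂ) else 0) • (aE q * bE r)
        - aE q * (aE s * (bE p * bE r)) := by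
  have h : bE p * aE s = algebraMap ℂ (Cl n) (if s = p then 1 else 0) - aE s * bE p :=
    eq_sub_of_add_eq (by rw [add_comm]; exact ab s p)
  calc (aE q * bE p) * (aE s * bE r) = aE q * ((bE p * aE s) * bE r) := by noncomm_ring
    _ = aE q * ((algebraMap ℂ (Cl n) (if s = p then 1 else 0) - aE s * bE p) * bE r) := by
        rw [h]
    _ = (if s = p then (1 : ℂ) else 0) • (aE q * bE r) - aE q * (aE s * (bE p * bE r)) := by
        simp only [Algebra.algebraMap_eq_smul_one, sub_mul, mul_sub, smul_mul_assoc,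
          mul_smul_comm, one_mul, mul_assoc]

end ThetaAux
namespace ThetaAux

variable {n : ℕ}

lemma main_collapse (f g : DeltaP n × DeltaP n → ℂ) :
    (∑ z : DeltaP n × DeltaP n, ∑ w : DeltaP n × DeltaP n,
        (if w.1 = z.2 then f z * g w else 0) • (aE z.1 * bE w.2))
      = ∑ q : DeltaP n, ∑ r : DeltaP n,
          (∑ p : DeltaP n, f (q, p) * g (p, r)) • (aE q * bE r) := by
  rw [Fintype.sum_prod_type]
  simp only [Fintype.sum_prod_type]
  simp only [ite_smul, zero_smul, Finset.sum_ite_irrel, Finset.sum_const_zero,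
    Finset.sum_ite_eq', Finset.mem_univ, if_true]
  refine Finset.sum_congr rfl fun q _ => ?_
  rw [Finset.sum_comm]
  exact Finset.sum_congr rfl fun r _ => (Finset.sum_smul).symm

lemma prod_expand (f g : DeltaP n × DeltaP n → ℂ) :
    (∑ z : DeltaP n × DeltaP n, f z • (aE z.1 * bE z.2)) *
        (∑ w : DeltaP n × DeltaP n, g w • (aE w.1 * bE w.2))
      = (∑ q : DeltaP n, ∑ r : DeltaP n,
          (∑ p : DeltaP n, f (q, p) * g (p, r)) • (aE q * bE r))
        - ∑ z : DeltaP n × DeltaP n, ∑ w : DeltaP n × DeltaP n,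
            (f z * g w) • (aE z.1 * (aE w.1 * (bE z.2 * bE w.2))) := by
  rw [Finset.sum_mul_sum, ← main_collapse f g, ← Finset.sum_sub_distrib]
  refine Finset.sum_congr rfl fun z _ => ?_
  rw [← Finset.sum_sub_distrib]
  refine Finset.sum_congr rfl fun w _ => ?_
  rw [smul_mul_smul_comm, mono z.1 z.2 w.1 w.2, smul_sub, smul_smul, mul_ite, mul_one,
    mul_zero]

lemma X_symm (f g : DeltaP n × DeltaP n → ℂ) :
    (∑ z : DeltaP n × DeltaP n, ∑ w : DeltaP n × DeltaP n,
        (f z * g w) • (aE z.1 * (aE w.1 * (bE z.2 * bE w.2))))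
      = ∑ z : DeltaP n × DeltaP n, ∑ w : DeltaP n × DeltaP n,
          (g z * f w) • (aE z.1 * (aE w.1 * (bE z.2 * bE w.2))) := by
  rw [Finset.sum_comm]
  refine Finset.sum_congr rfl fun z _ => Finset.sum_congr rfl fun w _ => ?_
  rw [mul_comm, swap4 z.1 z.2 w.1 w.2]

lemma clρ_comm {x y : Matrix (Fin n) (Fin n) ℂ} (hx : x ∈ strictUpper n)
    (hy : y ∈ strictUpper n) :
    clρ n x * clρ n y - clρ n y * clρ n x = clρ n (x * y - y * x) := by
  have coeff : ∀ q r : DeltaP n,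
      (∑ p : DeltaP n, cf x q p * cf y p r) - (∑ p : DeltaP n, cf y q p * cf x p r)
        = cf (x * y - y * x) q r := by
    intro q r
    have key : ∀ u v : Matrix (Fin n) (Fin n) ℂ,
        (∑ p : DeltaP n, cf u q p * cf v p r) = eDual q (adL u (adL v (eBasis r))) := by
      intro u v
      conv_rhs => rw [← expand_basis (adL v (eBasis r))]
      rw [map_sum, map_sum]
      refine Finset.sum_congr rfl fun p _ => ?_
      rw [_root_.map_smul, _root_.map_smul, smul_eq_mul]
      exact mul_comm _ _
    rw [key x y, key y x, ← map_sub, adL_comm hx hy]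
    rfl
  rw [clρ_eq x, clρ_eq y, clρ_eq (x * y - y * x), prod_expand, prod_expand,
    X_symm (fun z => cf y z.1 z.2) (fun w => cf x w.1 w.2)]
  rw [sub_sub_sub_cancel_right]
  rw [Fintype.sum_prod_type, ← Finset.sum_sub_distrib]
  refine Finset.sum_congr rfl fun q _ => ?_
  rw [← Finset.sum_sub_distrib]
  refine Finset.sum_congr rfl fun r _ => ?_
  rw [← sub_smul, coeff q r]

end ThetaAux
namespace ThetaAux

variable {n : ℕ}

lemma chi_comm_zero {x y : Matrix (Fin n) (Fin n) ℂ} (hx : x ∈ strictUpper n)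
    (hy : y ∈ strictUpper n) : chiFn n (x * y - y * x) = 0 := by
  have entry : ∀ (u v : Matrix (Fin n) (Fin n) ℂ), u ∈ strictUpper n → v ∈ strictUpper n →
      ∀ k i : Fin n, (i : ℕ) = (k : ℕ) + 1 → (u * v) k i = 0 := by
    intro u v hu hv k i h
    rw [Matrix.mul_apply]
    apply Finset.sum_eq_zero
    intro j _
    by_cases hj : k < j
    · have : i ≤ j := by
        rw [Fin.le_def]; rw [Fin.lt_def] at hj; omega
      rw [hv j i this, mul_zero]
    · rw [hu k j (not_lt.mp hj), zero_mul]
  unfold chiFn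
  rw [Matrix.trace]
  apply Finset.sum_eq_zero
  intro i _
  rw [Matrix.diag_apply, Matrix.mul_apply]
  apply Finset.sum_eq_zero
  intro k _
  simp only [fMat, Matrix.of_apply]
  split_ifs with h
  · rw [one_mul, Matrix.sub_apply, entry x y hx hy k i h, entry y x hy hx k i h, sub_zero]
  · rw [zero_mul]

end ThetaAux

set_option maxHeartbeats 1000000 in
open ThetaAux in
theorem thetaChi_lie_hom' (n : ℕ) (hn : 1 ≤ n) :
    ∀ x y : Matrix (Fin n) (Fin n) ℂ,
      x ∈ strictUpper n → y ∈ strictUpper n →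
      thetaChi n x * thetaChi n y - thetaChi n y * thetaChi n x =
        thetaChi n (x * y - y * x) := by
  intro x y hx hy
  have hrho := clρ_comm hx hy
  have hchi := chi_comm_zero hx hy
  have hU : (UniversalEnvelopingAlgebra.ι ℂ x -
        algebraMap ℂ (UniversalEnvelopingAlgebra ℂ (Matrix (Fin n) (Fin n) ℂ)) (chiFn n x)) *
      (UniversalEnvelopingAlgebra.ι ℂ y -
        algebraMap ℂ (UniversalEnvelopingAlgebra ℂ (Matrix (Fin n) (Fin n) ℂ)) (chiFn n y)) -
      (UniversalEnvelopingAlgebra.ι ℂ y -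
        algebraMap ℂ (UniversalEnvelopingAlgebra ℂ (Matrix (Fin n) (Fin n) ℂ)) (chiFn n y)) *
      (UniversalEnvelopingAlgebra.ι ℂ x -
        algebraMap ℂ (UniversalEnvelopingAlgebra ℂ (Matrix (Fin n) (Fin n) ℂ)) (chiFn n x)) =
      UniversalEnvelopingAlgebra.ι ℂ (x * y - y * x) := by
    have hb : (UniversalEnvelopingAlgebra.ι ℂ (x * y - y * x) :
          UniversalEnvelopingAlgebra ℂ (Matrix (Fin n) (Fin n) ℂ)) =
        UniversalEnvelopingAlgebra.ι ℂ x * UniversalEnvelopingAlgebra.ι ℂ y -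
          UniversalEnvelopingAlgebra.ι ℂ y * UniversalEnvelopingAlgebra.ι ℂ x := by
      rw [show x * y - y * x = ⁅x, y⁆ from (Ring.lie_def x y).symm, LieHom.map_lie,
        Ring.lie_def]
    rw [hb]
    simp only [Algebra.algebraMap_eq_smul_one, sub_mul, mul_sub, smul_mul_assoc,
      mul_smul_comm, one_mul, mul_one, smul_smul]
    module
  have expand2 : ∀ (U V : UniversalEnvelopingAlgebra ℂ (Matrix (Fin n) (Fin n) ℂ))
      (R S : Cl n),
      (U ⊗ₜ[ℂ] (1 : Cl n) +
          (1 : UniversalEnvelopingAlgebra ℂ (Matrix (Fin n) (Fin n) ℂ)) ⊗ₜ[ℂ] R) *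
        (V ⊗ₜ[ℂ] (1 : Cl n) +
          (1 : UniversalEnvelopingAlgebra ℂ (Matrix (Fin n) (Fin n) ℂ)) ⊗ₜ[ℂ] S)
        = (U * V) ⊗ₜ[ℂ] (1 : Cl n) + (U ⊗ₜ[ℂ] S + (V ⊗ₜ[ℂ] R +
            (1 : UniversalEnvelopingAlgebra ℂ (Matrix (Fin n) (Fin n) ℂ)) ⊗ₜ[ℂ] (R * S))) := by
    intro U V R S
    rw [add_mul, mul_add, mul_add, Algebra.TensorProduct.tmul_mul_tmul,
      Algebra.TensorProduct.tmul_mul_tmul, Algebra.TensorProduct.tmul_mul_tmul,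
      Algebra.TensorProduct.tmul_mul_tmul]
    simp only [mul_one, one_mul]
    abel
  simp only [thetaChi, hchi, map_zero, sub_zero]
  rw [expand2, expand2, ← hrho, ← hU, TensorProduct.sub_tmul, TensorProduct.tmul_sub]
  abel_nf
  simp only [TensorProduct.add_tmul, TensorProduct.smul_tmul']
  abel

/-- `θ_χ` is a Lie algebra homomorphism for the commutator bracket:
`θ_χ(x)θ_χ(y) − θ_χ(y)θ_χ(x) = θ_χ([x,y])` for `x, y ∈ n`. -/
theorem thetaChi_lie_hom (n : ℕ) (hn : 1 ≤ n) :
    ∀ x y : Matrix (Fin n) (Fin n) ℂ,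
      x ∈ strictUpper n → y ∈ strictUpper n →
      thetaChi n x * thetaChi n y - thetaChi n y * thetaChi n x =
        thetaChi n (x * y - y * x) :=
  thetaChi_lie_hom' n hn
end
end

section
/- Let n ≥ 1, f ∈ Matₙ(ℂ) the matrix with (i+1,i) entries 1 and all other entries 0, b the subspace of upper triangular matrices, and h the subspace of diagonal matrices. If ψ is an N-invariant polynomial function on f + b that vanishes on f + h (i.e. ψ(f + d) = 0 for every diagonal matrix d), then ψ = 0 on all of f + b. Equivalently, the restriction map ℂ[f+b]^N → ℂ[f+h] is injective. -/
open Matrix Polynomial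

/-- Companion-type matrix attached to a polynomial `p`: `f` plus a last
column whose entries are `-p.coeff i`. -/
noncomputable def compan (n : ℕ) (p : Polynomial ℂ) : Matrix (Fin n) (Fin n) ℂ :=
  fMat n + Matrix.of fun (i j : Fin n) => if (j : ℕ) = n - 1 then -p.coeff (i : ℕ) else 0

lemma compan_InFB (n : ℕ) (p : Polynomial ℂ) : InFB (compan n p) := by
  intro i j hij
  have hij' : (j : ℕ) < (i : ℕ) := hij
  have hi : (i : ℕ) < n := i.isLt
  simp only [compan, InFB, Matrix.sub_apply, Matrix.add_apply, Matrix.of_apply]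
  rw [if_neg (by omega)]
  ring

lemma InFB.low {n : ℕ} {x : Matrix (Fin n) (Fin n) ℂ} (hx : InFB x) {i j : Fin n}
    (h : (j : ℕ) < (i : ℕ)) : x i j = if (i : ℕ) = (j : ℕ) + 1 then 1 else 0 := by
  have h0 : (x - fMat n) i j = 0 := hx (show (id j : Fin n) < id i from h)
  have h1 : x i j = fMat n i j := sub_eq_zero.mp (by simpa [Matrix.sub_apply] using h0)
  simpa [fMat] using h1

/-- Every element of `f + b` is `N`-conjugate to the companion matrix of its
characteristic polynomial. -/
lemma exists_conj (n : ℕ) (hn : 1 ≤ n) (x : Matrix (Fin n) (Fin n) ℂ) (hx : InFB x) :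
    ∃ u : (Matrix (Fin n) (Fin n) ℂ)ˣ, IsUniUpper (u : Matrix (Fin n) (Fin n) ℂ) ∧
      x = (u : Matrix (Fin n) (Fin n) ℂ) * compan n x.charpoly *
        ((u⁻¹ : (Matrix (Fin n) (Fin n) ℂ)ˣ) : Matrix (Fin n) (Fin n) ℂ) := by
  set e0 : Fin n := ⟨0, hn⟩ with he0
  have hpow : ∀ k : ℕ, ∀ i : Fin n,
      ((k < (i : ℕ) → (x ^ k) i e0 = 0) ∧ ((i : ℕ) = k → (x ^ k) i e0 = 1)) := by
    intro k
    induction k with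
    | zero =>
      intro i
      constructor
      · intro h
        have : i ≠ e0 := by
          intro he; rw [he] at h; simp [he0] at h
        simp [Matrix.one_apply, this]
      · intro h
        have : i = e0 := Fin.ext (by simpa [he0] using h)
        simp [Matrix.one_apply, this]
    | succ k ih =>
      intro i
      have hexp : (x ^ (k + 1)) i e0 = ∑ j, x i j * (x ^ k) j e0 := by
        rw [pow_succ']
        simp [Matrix.mul_apply]
      constructor
      · intro h
        rw [hexp]
        apply Finset.sum_eq_zero
        intro j _
        by_cases hj : k < (j : ℕ)
        · rw [(ih j).1 hj, mul_zero]
        · rw [hx.low (show (j : ℕ) < (i : ℕ) by omega), if_neg (by omega), zero_mul]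
      · intro h
        have hk : k < n := by have := i.isLt; omega
        rw [hexp]
        rw [Finset.sum_eq_single (⟨k, hk⟩ : Fin n)]
        · rw [hx.low (show ((⟨k, hk⟩ : Fin n) : ℕ) < (i : ℕ) by simp; omega),
            if_pos (by simpa using h), (ih _).2 rfl, one_mul]
        · intro j _ hj
          have hj' : (j : ℕ) ≠ k := fun hc => hj (Fin.ext (by simpa using hc))
          by_cases hjk : k < (j : ℕ)
          · rw [(ih j).1 hjk, mul_zero]
          · rw [hx.low (show (j : ℕ) < (i : ℕ) by omega), if_neg (by omega), zero_mul]
        · intro hmem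
          exact absurd (Finset.mem_univ _) hmem
  set u : Matrix (Fin n) (Fin n) ℂ := Matrix.of fun i k => (x ^ (k : ℕ)) i e0 with hu
  have hut : u.BlockTriangular id := by
    intro i k hik
    exact (hpow (k : ℕ) i).1 hik
  have hud : ∀ i : Fin n, u i i = 1 := fun i => (hpow (i : ℕ) i).2 rfl
  have hdet : u.det = 1 := by
    rw [Matrix.det_of_upperTriangular hut]
    exact Finset.prod_eq_one fun i _ => hud i
  have hunit : IsUnit u := (Matrix.isUnit_iff_isUnit_det u).mpr (by rw [hdet]; exact isUnit_one)
  set p : Polynomial ℂ := x.charpoly with hp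
  have hdeg : p.natDegree = n := by
    rw [hp, x.charpoly_natDegree_eq_dim, Fintype.card_fin]
  have hCH : (x ^ n : Matrix (Fin n) (Fin n) ℂ) =
      -∑ m ∈ Finset.range n, p.coeff m • x ^ m := by
    have h0 := x.aeval_self_charpoly
    rw [Polynomial.aeval_eq_sum_range, ← hp, hdeg, Finset.sum_range_succ] at h0
    have hc : p.coeff n = 1 := by
      have hm := x.charpoly_monic
      rw [← hp] at hm
      have := hm.coeff_natDegree
      rwa [hdeg] at this
    rw [hc, one_smul] at h0
    exact (eq_neg_of_add_eq_zero_right h0)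
  have hcomm : x * u = u * compan n p := by
    ext i k
    have hL : (x * u) i k = (x ^ ((k : ℕ) + 1)) i e0 := by
      rw [pow_succ']
      simp [Matrix.mul_apply, hu]
    rw [hL, Matrix.mul_apply]
    by_cases hk : (k : ℕ) = n - 1
    · have hk1 : (k : ℕ) + 1 = n := by have := k.isLt; omega
      rw [hk1]
      have hCi := congrFun (congrFun hCH i) e0
      simp only [Matrix.neg_apply, Matrix.sum_apply, Matrix.smul_apply, smul_eq_mul] at hCi
      have hterm : ∀ j : Fin n,
          u i j * compan n p j k = -(p.coeff (j : ℕ) * (x ^ (j : ℕ)) i e0) := by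
        intro j
        simp only [compan, Matrix.add_apply, Matrix.of_apply, fMat, hu]
        rw [if_neg (by have := j.isLt; omega), if_pos hk, zero_add]
        ring
      rw [Finset.sum_congr rfl (fun j _ => hterm j), hCi]
      rw [← Fin.sum_univ_eq_sum_range (fun m => p.coeff m * (x ^ m) i e0) n]
      rw [← Finset.sum_neg_distrib]
    · have hk1 : (k : ℕ) + 1 < n := by have := k.isLt; omega
      rw [Finset.sum_eq_single (⟨(k : ℕ) + 1, hk1⟩ : Fin n)]
      · simp only [compan, Matrix.add_apply, Matrix.of_apply, fMat, hu]
        rw [if_pos (by simp), if_neg hk, add_zero, mul_one]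
      · intro j _ hj
        have hj' : (j : ℕ) ≠ (k : ℕ) + 1 := fun hc => hj (Fin.ext (by simpa using hc))
        simp only [compan, Matrix.add_apply, Matrix.of_apply, fMat, hu]
        rw [if_neg hj', if_neg hk, add_zero, mul_zero]
      · intro hmem
        exact absurd (Finset.mem_univ _) hmem
  refine ⟨hunit.unit, ⟨?_, ?_⟩, ?_⟩
  · rw [hunit.unit_spec]; exact hut
  · rw [hunit.unit_spec]; exact hud
  · have hxu : x * (hunit.unit : Matrix (Fin n) (Fin n) ℂ) =
        (hunit.unit : Matrix (Fin n) (Fin n) ℂ) * compan n p := by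
      rw [hunit.unit_spec]; exact hcomm
    calc x = x * ((hunit.unit : Matrix (Fin n) (Fin n) ℂ) *
          ((hunit.unit⁻¹ : (Matrix (Fin n) (Fin n) ℂ)ˣ) : Matrix (Fin n) (Fin n) ℂ)) := by
            rw [← Units.val_mul, mul_inv_cancel, Units.val_one, mul_one]
      _ = x * (hunit.unit : Matrix (Fin n) (Fin n) ℂ) *
          ((hunit.unit⁻¹ : (Matrix (Fin n) (Fin n) ℂ)ˣ) : Matrix (Fin n) (Fin n) ℂ) := by
            rw [mul_assoc]
      _ = (hunit.unit : Matrix (Fin n) (Fin n) ℂ) * compan n p *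
          ((hunit.unit⁻¹ : (Matrix (Fin n) (Fin n) ℂ)ˣ) : Matrix (Fin n) (Fin n) ℂ) := by
            rw [hxu]

lemma charpoly_f_add_diag (n : ℕ) (d : Fin n → ℂ) :
    (fMat n + Matrix.diagonal d).charpoly = ∏ i : Fin n, (X - C (d i)) := by
  have tri : (charmatrix (fMat n + Matrix.diagonal d)).BlockTriangular OrderDual.toDual := by
    intro i j h
    have hij : (i : Fin n) < j := h
    have hne : i ≠ j := ne_of_lt hij
    rw [charmatrix_apply_ne _ _ _ hne]
    have : (fMat n + Matrix.diagonal d) i j = 0 := by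
      simp only [Matrix.add_apply, fMat, Matrix.of_apply, Matrix.diagonal_apply_ne _ hne]
      rw [if_neg (by have : (i : ℕ) < (j : ℕ) := hij; omega)]
      ring
    rw [this]
    simp
  rw [Matrix.charpoly, Matrix.det_of_lowerTriangular _ tri]
  apply Finset.prod_congr rfl
  intro i _
  rw [charmatrix_apply_eq]
  congr 1
  simp [fMat, Matrix.diagonal_apply_eq]

lemma exists_diag (n : ℕ) (p : Polynomial ℂ) (hm : p.Monic) (hdeg : p.natDegree = n) :
    ∃ d : Fin n → ℂ, (∏ i : Fin n, (X - C (d i))) = p := by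
  have hs : p.Splits := IsAlgClosed.splits p
  have hcard : p.roots.card = n := (splits_iff_card_roots.mp hs).trans hdeg
  set l := p.roots.toList with hl
  have hlen : l.length = n := by rw [hl, Multiset.length_toList, hcard]
  refine ⟨fun i => l.get (Fin.cast hlen.symm i), ?_⟩
  have h1 : p = (p.roots.map fun a => X - C a).prod :=
    hs.eq_prod_roots_of_monic hm
  rw [h1, ← Multiset.coe_toList p.roots, ← hl, Multiset.map_coe, Multiset.prod_coe]
  rw [← Fin.prod_univ_fun_getElem l (fun a => X - C a)]
  exact Fintype.prod_equiv (finCongr hlen.symm) _ _ (fun i => rfl)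

/-- An `N`-invariant polynomial function on `f + b` vanishing on `f + h`
(`h` the diagonal matrices) vanishes on all of `f + b`: the restriction map
`ℂ[f+b]^N → ℂ[f+h]` is injective. -/
theorem restriction_to_f_add_h_injective (n : ℕ) (hn : 1 ≤ n)
    (P : MvPolynomial (Fin n × Fin n) ℂ)
    (hinv : ∀ (u : (Matrix (Fin n) (Fin n) ℂ)ˣ) (x : Matrix (Fin n) (Fin n) ℂ),
      IsUniUpper (u : Matrix (Fin n) (Fin n) ℂ) → InFB x →
      evalMat P ((u : Matrix (Fin n) (Fin n) ℂ) * x *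
        ((u⁻¹ : (Matrix (Fin n) (Fin n) ℂ)ˣ) : Matrix (Fin n) (Fin n) ℂ)) = evalMat P x)
    (hvan : ∀ d : Matrix (Fin n) (Fin n) ℂ, d.IsDiag → evalMat P (fMat n + d) = 0) :
    ∀ x : Matrix (Fin n) (Fin n) ℂ, InFB x → evalMat P x = 0 := by
  intro x hx
  obtain ⟨u, hu, hxeq⟩ := exists_conj n hn x hx
  have hC : InFB (compan n x.charpoly) := compan_InFB n x.charpoly
  have h1 : evalMat P x = evalMat P (compan n x.charpoly) := by
    conv_lhs => rw [hxeq]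
    exact hinv u _ hu hC
  obtain ⟨d, hd⟩ := exists_diag n x.charpoly x.charpoly_monic
    (by rw [x.charpoly_natDegree_eq_dim, Fintype.card_fin])
  set y := fMat n + Matrix.diagonal d with hy
  have hyInFB : InFB y := by
    have : y - fMat n = Matrix.diagonal d := by rw [hy, add_sub_cancel_left]
    rw [InFB, this]
    exact Matrix.blockTriangular_diagonal d
  have hcp : y.charpoly = x.charpoly := by rw [hy, charpoly_f_add_diag, hd]
  obtain ⟨v, hv, hyeq⟩ := exists_conj n hn y hyInFB
  have h2 : evalMat P y = evalMat P (compan n x.charpoly) := by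
    rw [hcp] at hyeq
    conv_lhs => rw [hyeq]
    exact hinv v _ hv hC
  have h3 : evalMat P y = 0 := hvan (Matrix.diagonal d) (Matrix.isDiag_diagonal d)
  rw [h1, ← h2, h3]
end

section
/- Let n ≥ 1, let f ∈ Matₙ(ℂ) be the matrix with (i+1,i) entry 1 for 1 ≤ i ≤ n−1 and all other entries 0, and let d ∈ Matₙ(ℂ) be a diagonal matrix with pairwise distinct diagonal entries. Then the linear map n × h → b given by (y, z) ↦ [y, f + d] + z is a linear isomorphism, where n is the space of strictly upper triangular matrices, h the space of diagonal matrices, and b the space of upper triangular matrices. -/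
open Matrix

lemma mul_fMat {n : ℕ} (y : Matrix (Fin n) (Fin n) ℂ) (i j : Fin n) :
    (y * fMat n) i j = if h : (j : ℕ) + 1 < n then y i ⟨(j : ℕ) + 1, h⟩ else 0 := by
  rw [mul_apply]
  simp only [fMat, of_apply, mul_ite, mul_one, mul_zero]
  split
  · next h =>
    rw [Finset.sum_eq_single (⟨(j : ℕ) + 1, h⟩ : Fin n)]
    · simp
    · intro k _ hk
      rw [if_neg]
      intro hc
      exact hk (Fin.ext hc)
    · simp
  · next h =>
    apply Finset.sum_eq_zero
    intro k _
    rw [if_neg]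
    intro hc
    exact h (hc ▸ k.isLt)

lemma fMat_mul {n : ℕ} (y : Matrix (Fin n) (Fin n) ℂ) (i j : Fin n) :
    (fMat n * y) i j = if h : 0 < (i : ℕ) then
      y ⟨(i : ℕ) - 1, lt_of_le_of_lt (Nat.sub_le _ _) i.isLt⟩ j else 0 := by
  rw [mul_apply]
  simp only [fMat, of_apply, ite_mul, one_mul, zero_mul]
  split
  · next h =>
    rw [Finset.sum_eq_single (⟨(i : ℕ) - 1, lt_of_le_of_lt (Nat.sub_le _ _) i.isLt⟩ : Fin n)]
    · rw [if_pos]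
      simp
      omega
    · intro k _ hk
      rw [if_neg]
      intro hc
      apply hk
      apply Fin.ext
      simp
      omega
    · simp
  · next h =>
    apply Finset.sum_eq_zero
    intro k _
    rw [if_neg]
    omega

lemma mul_diag {n : ℕ} {d : Matrix (Fin n) (Fin n) ℂ} (hd : d.IsDiag)
    (y : Matrix (Fin n) (Fin n) ℂ) (i j : Fin n) :
    (y * d) i j = y i j * d j j := by
  rw [mul_apply, Finset.sum_eq_single j]
  · intro k _ hk
    rw [hd hk, mul_zero]
  · simp

lemma diag_mul {n : ℕ} {d : Matrix (Fin n) (Fin n) ℂ} (hd : d.IsDiag)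
    (y : Matrix (Fin n) (Fin n) ℂ) (i j : Fin n) :
    (d * y) i j = d i i * y i j := by
  rw [mul_apply, Finset.sum_eq_single i]
  · intro k _ hk
    rw [hd (Ne.symm hk), zero_mul]
  · simp

lemma entry_formula {n : ℕ} {d : Matrix (Fin n) (Fin n) ℂ} (hd : d.IsDiag)
    (y : Matrix (Fin n) (Fin n) ℂ) (i j : Fin n) :
    (y * (fMat n + d) - (fMat n + d) * y) i j =
      (if h : (j : ℕ) + 1 < n then y i ⟨(j : ℕ) + 1, h⟩ else 0)
      - (if h : 0 < (i : ℕ) then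
          y ⟨(i : ℕ) - 1, lt_of_le_of_lt (Nat.sub_le _ _) i.isLt⟩ j else 0)
      + y i j * (d j j - d i i) := by
  rw [mul_add, add_mul, Matrix.sub_apply, Matrix.add_apply, Matrix.add_apply, mul_fMat, fMat_mul,
    mul_diag hd, diag_mul hd]
  ring

noncomputable def ySol (n : ℕ) (d b : Matrix (Fin n) (Fin n) ℂ) (i j : Fin n) : ℂ :=
  if hij : (i : ℕ) < (j : ℕ) then
    (b i j
      + (if h : 0 < (i : ℕ) then
          ySol n d b ⟨(i : ℕ) - 1, lt_of_le_of_lt (Nat.sub_le _ _) i.isLt⟩ j else 0)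
      - (if h : (j : ℕ) + 1 < n then ySol n d b i ⟨(j : ℕ) + 1, h⟩ else 0))
      / (d j j - d i i)
  else 0
termination_by n - ((j : ℕ) - (i : ℕ))
decreasing_by
  · have := j.isLt; simp; omega
  · have := j.isLt; simp; omega

/-- For a diagonal matrix `d` with pairwise distinct diagonal entries, the linear
map `n × h → b`, `(y, z) ↦ [y, f + d] + z`, is a linear isomorphism: it is
well defined into `b`, injective, and surjective onto `b`. Here `n`, `h`, `b` are
respectively the strictly upper triangular, diagonal, and upper triangular
matrices. -/
theorem bracket_with_regular_element_iso (n : ℕ) (hn : 1 ≤ n)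
    (d : Matrix (Fin n) (Fin n) ℂ) (hd : d.IsDiag)
    (hdist : ∀ i j : Fin n, i ≠ j → d i i ≠ d j j) :
    (∀ y z : Matrix (Fin n) (Fin n) ℂ,
      (∀ i j : Fin n, j ≤ i → y i j = 0) → z.IsDiag →
      ((y * (fMat n + d) - (fMat n + d) * y) + z).BlockTriangular id) ∧
    (∀ y z y' z' : Matrix (Fin n) (Fin n) ℂ,
      (∀ i j : Fin n, j ≤ i → y i j = 0) → z.IsDiag →
      (∀ i j : Fin n, j ≤ i → y' i j = 0) → z'.IsDiag →
      (y * (fMat n + d) - (fMat n + d) * y) + z =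
        (y' * (fMat n + d) - (fMat n + d) * y') + z' →
      y = y' ∧ z = z') ∧
    (∀ b : Matrix (Fin n) (Fin n) ℂ, b.BlockTriangular id →
      ∃ y z : Matrix (Fin n) (Fin n) ℂ,
        (∀ i j : Fin n, j ≤ i → y i j = 0) ∧ z.IsDiag ∧
        (y * (fMat n + d) - (fMat n + d) * y) + z = b) := by
  have wd : ∀ y z : Matrix (Fin n) (Fin n) ℂ,
      (∀ i j : Fin n, j ≤ i → y i j = 0) → z.IsDiag →
      ((y * (fMat n + d) - (fMat n + d) * y) + z).BlockTriangular id := by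
    intro y z hy hz i j hij
    simp only [id] at hij
    rw [Matrix.add_apply, entry_formula hd, hz (ne_of_gt hij)]
    have h1 : y i j = 0 := hy i j (le_of_lt hij)
    have h2 : (if h : (j : ℕ) + 1 < n then y i ⟨(j : ℕ) + 1, h⟩ else 0) = 0 := by
      split
      · apply hy; simp [Fin.le_def]; omega
      · rfl
    have h3 : (if h : 0 < (i : ℕ) then
        y ⟨(i : ℕ) - 1, lt_of_le_of_lt (Nat.sub_le _ _) i.isLt⟩ j else 0) = 0 := by
      split
      · apply hy; simp [Fin.le_def]; have := hij; rw [Fin.lt_def] at this; omega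
      · rfl
    rw [h1, h2, h3]
    ring
  refine ⟨wd, ?_, ?_⟩
  · intro y z y' z' hy hz hy' hz' heq
    have key : ∀ m : ℕ, ∀ i j : Fin n, n ≤ m + ((j : ℕ) - (i : ℕ)) → y i j = y' i j := by
      intro m
      induction m with
      | zero =>
        intro i j hm
        have := j.isLt
        omega
      | succ m ih =>
        intro i j hm
        by_cases hij : (j : ℕ) ≤ (i : ℕ)
        · rw [hy i j hij, hy' i j hij]
        · push_neg at hij
          have hne : i ≠ j := by intro h; rw [h] at hij; omega
          have hentry := congrFun (congrFun heq i) j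
          rw [Matrix.add_apply, Matrix.add_apply, entry_formula hd, entry_formula hd,
            hz hne, hz' hne] at hentry
          have hiltn := i.isLt
          have hjltn := j.isLt
          have hA : (if h : (j : ℕ) + 1 < n then y i ⟨(j : ℕ) + 1, h⟩ else 0)
              = (if h : (j : ℕ) + 1 < n then y' i ⟨(j : ℕ) + 1, h⟩ else 0) := by
            split
            · apply ih; simp; omega
            · rfl
          have hB : (if h : 0 < (i : ℕ) then
                y ⟨(i : ℕ) - 1, lt_of_le_of_lt (Nat.sub_le _ _) i.isLt⟩ j else 0)
              = (if h : 0 < (i : ℕ) then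
                y' ⟨(i : ℕ) - 1, lt_of_le_of_lt (Nat.sub_le _ _) i.isLt⟩ j else 0) := by
            split
            · apply ih; simp; omega
            · rfl
          rw [hA, hB] at hentry
          have hc : d j j - d i i ≠ 0 := sub_ne_zero.mpr (Ne.symm (hdist i j hne))
          have : y i j * (d j j - d i i) = y' i j * (d j j - d i i) := by
            linear_combination hentry
          exact mul_right_cancel₀ hc this
    have hyy : y = y' := by
      ext i j
      exact key n i j (by omega)
    refine ⟨hyy, ?_⟩
    rw [hyy] at heq
    exact add_left_cancel heq
  · intro b hb
    set y : Matrix (Fin n) (Fin n) ℂ := Matrix.of (ySol n d b) with hy_def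
    have hy : ∀ i j : Fin n, j ≤ i → y i j = 0 := by
      intro i j hij
      rw [hy_def, of_apply, ySol]
      rw [dif_neg]
      rw [Fin.le_def] at hij
      omega
    set z : Matrix (Fin n) (Fin n) ℂ :=
      Matrix.diagonal (fun i => (b - (y * (fMat n + d) - (fMat n + d) * y)) i i) with hz_def
    refine ⟨y, z, hy, Matrix.isDiag_diagonal _, ?_⟩
    ext i j
    rcases lt_trichotomy (i : ℕ) (j : ℕ) with hij | hij | hij
    · have hne : i ≠ j := fun h => by rw [h] at hij; omega
      rw [Matrix.add_apply, hz_def, Matrix.diagonal_apply_ne _ hne, entry_formula hd]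
      have hc : d j j - d i i ≠ 0 := sub_ne_zero.mpr (Ne.symm (hdist i j hne))
      have hyij : y i j = (b i j
          + (if h : 0 < (i : ℕ) then
              y ⟨(i : ℕ) - 1, lt_of_le_of_lt (Nat.sub_le _ _) i.isLt⟩ j else 0)
          - (if h : (j : ℕ) + 1 < n then y i ⟨(j : ℕ) + 1, h⟩ else 0))
          / (d j j - d i i) := by
        rw [hy_def, of_apply, ySol, dif_pos hij]
        rfl
      rw [hyij, div_mul_cancel₀ _ hc]
      ring
    · have heq : i = j := Fin.ext hij
      subst heq
      rw [Matrix.add_apply, hz_def, Matrix.diagonal_apply_eq]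
      simp only [Matrix.sub_apply]
      ring
    · have hne : i ≠ j := fun h => by rw [h] at hij; omega
      have h0 : ((y * (fMat n + d) - (fMat n + d) * y) + z) i j = 0 := by
        apply wd y z hy (Matrix.isDiag_diagonal _)
        exact hij
      rw [h0]
      exact (hb hij).symm
end

section
/- Let R be a commutative ring containing ℚ (a commutative ℚ-algebra), let ∂ be a derivation of R, and let I be a differential ideal of R, i.e. an ideal with ∂I ⊆ I. Then the radical √I is also a differential ideal: ∂(√I) ⊆ √I. -/
/-- If `I` is a differential ideal of a commutative `ℚ`-algebra `R` with respect
to a derivation `∂` (i.e. `∂ I ⊆ I`), then the radical `√I` is also a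
differential ideal: `∂(√I) ⊆ √I`. -/
theorem radical_of_differential_ideal_is_differential
    (R : Type*) [CommRing R] [Algebra ℚ R]
    (D : Derivation ℚ R R) (I : Ideal R) (hI : ∀ a ∈ I, D a ∈ I) :
    ∀ a ∈ I.radical, D a ∈ I.radical := by
  -- dividing by a nonzero natural number preserves membership in I
  have hdiv : ∀ (m : ℕ), m ≠ 0 → ∀ x : R, (m : R) * x ∈ I → x ∈ I := by
    intro m hm x hx
    have h1 : x = algebraMap ℚ R ((m : ℚ)⁻¹) * ((m : R) * x) := by
      rw [← mul_assoc]
      have : algebraMap ℚ R ((m : ℚ)⁻¹) * (m : R) = 1 := by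
        rw [show ((m : R)) = algebraMap ℚ R (m : ℚ) by simp, ← map_mul]
        rw [inv_mul_cancel₀ (by exact_mod_cast hm)]
        simp
      rw [this, one_mul]
    rw [h1]
    exact Ideal.mul_mem_left _ _ hx
  intro a ha
  obtain ⟨n, hn⟩ := ha
  have key : ∀ k, k ≤ n → a ^ (n - k) * (D a) ^ (2 * k + 1) ∈ I := by
    intro k
    induction k with
    | zero =>
      intro _
      simpa using Ideal.mul_mem_right _ _ hn
    | succ k ih =>
      intro hk
      have h1 := ih (le_of_lt (Nat.lt_of_succ_le hk))
      have hD := hI _ h1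
      apply hdiv (n - k) (by omega)
      have hnk : n - k = (n - (k + 1)) + 1 := by omega
      have heq : ((n - k : ℕ) : R) * (a ^ (n - (k + 1)) * (D a) ^ (2 * (k + 1) + 1)) =
          D a * D (a ^ (n - k) * (D a) ^ (2 * k + 1)) -
          ((2 * k + 1 : ℕ) : R) * ((a ^ (n - k) * (D a) ^ (2 * k + 1)) * D (D a)) := by
        rw [Derivation.leibniz, Derivation.leibniz_pow, Derivation.leibniz_pow]
        rw [hnk]
        simp only [smul_eq_mul, nsmul_eq_mul, Nat.add_sub_cancel, Nat.cast_add,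
          Nat.cast_mul, Nat.cast_ofNat, Nat.cast_one]
        ring
      rw [heq]
      exact I.sub_mem (Ideal.mul_mem_left _ _ hD)
        (Ideal.mul_mem_left _ _ (Ideal.mul_mem_right _ _ h1))
  refine ⟨2 * n + 1, ?_⟩
  simpa using key n le_rfl
end

section
/- Let g be a finite-dimensional semisimple Lie algebra over ℂ and let (e, h, f) be an sl₂-triple in g (so [h,e] = 2e, [h,f] = −2f, [e,f] = h, with e ≠ 0). Then g decomposes as the direct sum g = g^e ⊕ [g, f] of the centralizer of e and the image of ad f: ker(ad e) + range(ad f) = g and ker(ad e) ∩ range(ad f) = 0. (This expresses that the Slodowy slice S_f = f + g^e intersects the adjoint orbit of f transversally at f.) -/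
open Module LieAlgebra

private lemma intertwine_maxGenEigenspace {L : Type*} [AddCommGroup L] [Module ℂ L]
    (H B : Module.End ℂ L) (c : ℂ) (hcomm : ∀ x, H (B x) = B (H x) + c • B x)
    {μ : ℂ} {x : L} (hx : x ∈ H.maxGenEigenspace μ) :
    B x ∈ H.maxGenEigenspace (μ + c) := by
  rw [Module.End.mem_maxGenEigenspace] at hx ⊢
  obtain ⟨k, hk⟩ := hx
  refine ⟨k, ?_⟩
  have key : ∀ (j : ℕ) (y : L), ((H - (μ + c) • 1) ^ j) (B y) = B (((H - μ • 1) ^ j) y) := by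
    intro j
    induction j with
    | zero => simp
    | succ j ih =>
      intro y
      rw [pow_succ, Module.End.mul_apply, pow_succ, Module.End.mul_apply]
      have h1 : (H - (μ + c) • 1) (B y) = B ((H - μ • 1) y) := by
        have := hcomm y
        simp only [LinearMap.sub_apply, LinearMap.smul_apply, Module.End.one_apply, this,
          map_sub, map_smul]
        module
      rw [h1, ih]
  rw [key k x, hk, map_zero]

private lemma eigenvalue_of_mem_maxGen {L : Type*} [AddCommGroup L] [Module ℂ L]
    {H : Module.End ℂ L} {μ : ℂ} {x : L} (hx : x ∈ H.maxGenEigenspace μ) (hx0 : x ≠ 0) :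
    H.HasEigenvalue μ := by
  rw [Module.End.mem_maxGenEigenspace] at hx
  obtain ⟨k, hk⟩ := hx
  refine Module.End.hasEigenvalue_of_hasGenEigenvalue (k := k) ?_
  rw [Module.End.hasGenEigenvalue_iff]
  exact (Submodule.ne_bot_iff _).mpr ⟨x, Module.End.mem_genEigenspace_nat.mpr hk, hx0⟩

private lemma sl2_ker_inf_range {L : Type*} [LieRing L] [LieAlgebra ℂ L] [FiniteDimensional ℂ L]
    (e h f : L)
    (h1 : ⁅h, e⁆ = (2 : ℂ) • e) (h2 : ⁅h, f⁆ = (-2 : ℂ) • f) (h3 : ⁅e, f⁆ = h) :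
    ∀ y : L, ⁅e, y⁆ = 0 → (∃ z : L, y = ⁅f, z⁆) → y = 0 := by
  classical
  by_cases hh : h = 0
  · have hf0 : f = 0 := by
      have : (0 : L) = (-2 : ℂ) • f := by rw [← h2, hh, zero_lie]
      have h4 : (-2 : ℂ) • f = 0 := this.symm
      rcases smul_eq_zero.mp h4 with hc | hf
      · norm_num at hc
      · exact hf
    rintro y _ ⟨z, hz⟩
    rw [hz, hf0, zero_lie]
  intro y hy hyz
  by_contra hy0
  obtain ⟨z, hz⟩ := hyz
  set H : Module.End ℂ L := LieAlgebra.ad ℂ L h with hH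
  set E : Module.End ℂ L := LieAlgebra.ad ℂ L e with hE
  set F : Module.End ℂ L := LieAlgebra.ad ℂ L f with hF
  have hEapp : ∀ x, E x = ⁅e, x⁆ := fun x => rfl
  have hFapp : ∀ x, F x = ⁅f, x⁆ := fun x => rfl
  have hHapp : ∀ x, H x = ⁅h, x⁆ := fun x => rfl
  -- commutation relations
  have commE : ∀ x, H (E x) = E (H x) + (2 : ℂ) • E x := by
    intro x
    simp only [hEapp, hHapp]
    rw [leibniz_lie h e x, h1, smul_lie, add_comm]
  have commF : ∀ x, H (F x) = F (H x) + (-2 : ℂ) • F x := by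
    intro x
    simp only [hFapp, hHapp]
    rw [leibniz_lie h f x, h2, smul_lie, add_comm]
  have commEF : ∀ x, E (F x) = F (E x) + H x := by
    intro x
    simp only [hEapp, hFapp, hHapp]
    rw [leibniz_lie e f x, h3, add_comm]
  -- the submodule K = ker E ⊓ range F is H-invariant
  set K : Submodule ℂ L := LinearMap.ker E ⊓ LinearMap.range F with hK
  have hKinv : ∀ x ∈ K, H x ∈ K := by
    rintro x ⟨hx1, hx2⟩
    constructor
    · have : E x = 0 := hx1
      have h5 := commE x
      rw [this] at h5
      simp only [map_zero, smul_zero, add_zero] at h5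
      simpa only [SetLike.mem_coe, LinearMap.mem_ker] using h5.symm
    · obtain ⟨u, hu⟩ := hx2
      refine ⟨H u + (-2 : ℂ) • u, ?_⟩
      rw [map_add, map_smul, ← commF u, hu]
  -- find an eigenvector of H inside K
  have hyK : y ∈ K := ⟨by simpa only [SetLike.mem_coe, LinearMap.mem_ker, hEapp] using hy, ⟨z, hz.symm⟩⟩
  haveI : Nontrivial K := Submodule.nontrivial_iff_ne_bot.mpr (by
    intro hbot
    rw [hbot] at hyK
    exact hy0 (by simpa using hyK))
  set H' : Module.End ℂ K := H.restrict hKinv with hH'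
  obtain ⟨μ, hμ⟩ := Module.End.exists_eigenvalue H'
  obtain ⟨v₀, hv₀⟩ := hμ.exists_hasEigenvector
  set v : L := (v₀ : L) with hv
  have hv0 : v ≠ 0 := fun hc => hv₀.right (Subtype.ext hc)
  have hvH : ⁅h, v⁆ = μ • v := by
    have := hv₀.apply_eq_smul
    have h6 : (H v : L) = μ • v := by
      rw [← LinearMap.restrict_coe_apply H hKinv v₀, this]
      rfl
    exact h6
  have hvK : v ∈ K := v₀.2
  have hvE : ⁅e, v⁆ = 0 := hvK.1
  have hvR : v ∈ LinearMap.range F := hvK.2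
  -- the sl2 triple and natural weight
  have t : IsSl2Triple h e f := by
    refine ⟨hh, h3, ?_, ?_⟩
    · rw [h1, two_smul, two_smul]
    · rw [h2, neg_smul, two_smul, two_smul]
  have P : t.HasPrimitiveVectorWith v μ := ⟨hv0, hvH, hvE⟩
  obtain ⟨n, hn⟩ := P.exists_nat
  -- generalized eigenspace decomposition of H
  set V : ℂ → Submodule ℂ L := H.maxGenEigenspace with hV
  have hSup := Module.End.iSup_maxGenEigenspace_eq_top H
  have internal : DirectSum.IsInternal V :=
    DirectSum.isInternal_submodule_of_iSupIndep_of_iSup_eq_top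
      (Module.End.independent_maxGenEigenspace H) hSup
  letI : DirectSum.Decomposition V := internal.chooseDecomposition
  have hEmap : ∀ (ν : ℂ) (x : L), x ∈ V ν → E x ∈ V (ν + 2) := fun ν x hx =>
    intertwine_maxGenEigenspace H E 2 commE hx
  have hFmap : ∀ (ν : ℂ) (x : L), x ∈ V ν → F x ∈ V (ν - 2) := fun ν x hx => by
    have h7 := intertwine_maxGenEigenspace H F (-2) commF hx
    rwa [show ν + (-2) = ν - 2 from by ring] at h7
  have hvV : v ∈ V (n : ℂ) := by
    rw [hV, Module.End.mem_maxGenEigenspace]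
    refine ⟨1, ?_⟩
    simp only [pow_one, LinearMap.sub_apply, LinearMap.smul_apply, Module.End.one_apply]
    rw [hHapp, hvH, hn, sub_self]
  -- project the preimage to the weight-(n+2) component
  have hπ : ∀ x : L, ((DirectSum.decompose V (F x) (n : ℂ) : L))
      = F ((DirectSum.decompose V x ((n : ℂ) + 2) : L)) := by
    intro x
    have hmem : x ∈ (⊤ : Submodule ℂ L) := trivial
    rw [← hSup] at hmem
    refine Submodule.iSup_induction (motive := fun x => ((DirectSum.decompose V (F x) (n : ℂ) : L))
      = F ((DirectSum.decompose V x ((n : ℂ) + 2) : L))) _ hmem ?_ ?_ ?_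
    · intro ν a ha
      by_cases hν : ν = (n : ℂ) + 2
      · subst hν
        have hFa : F a ∈ V (n : ℂ) := by
          have h8 := hFmap _ a ha
          rwa [show (n : ℂ) + 2 - 2 = (n : ℂ) from by ring] at h8
        rw [DirectSum.decompose_of_mem_same V hFa, DirectSum.decompose_of_mem_same V ha]
      · rw [DirectSum.decompose_of_mem_ne V ha hν,
          DirectSum.decompose_of_mem_ne V (hFmap _ a ha)
            (fun hc => hν (by linear_combination hc)), map_zero]
    · simp
    · intro a b ha hb
      rw [map_add, DirectSum.decompose_add, DirectSum.decompose_add]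
      push_cast [DirectSum.add_apply]
      rw [ha, hb, map_add]
  obtain ⟨u, hu⟩ := hvR
  set u' : L := (DirectSum.decompose V u ((n : ℂ) + 2) : L) with hu'def
  have hu'V : u' ∈ V ((n : ℂ) + 2) := (DirectSum.decompose V u ((n : ℂ) + 2)).2
  have hFu' : F u' = v := by
    have h8 := (hπ u).symm
    rwa [hu, DirectSum.decompose_of_mem_same V hvV] at h8
  have hu'0 : u' ≠ 0 := fun hc => hv0 (by rw [← hFu', hc, map_zero])
  -- the chain E^k u'
  have hwV : ∀ k : ℕ, (E ^ k) u' ∈ V ((n : ℂ) + 2 + 2 * k) := by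
    intro k
    induction k with
    | zero => simpa using hu'V
    | succ k ih =>
      have h9 : (E ^ (k + 1)) u' = E ((E ^ k) u') := by rw [pow_succ' E k]; rfl
      rw [h9]
      have h10 := hEmap _ _ ih
      rwa [show (n : ℂ) + 2 + 2 * k + 2 = (n : ℂ) + 2 + 2 * ((k : ℕ) + 1 : ℕ) from by
        push_cast; ring] at h10
  have hex : ∃ k : ℕ, (E ^ k) u' = 0 := by
    by_contra hall
    push_neg at hall
    have hinf : Set.Infinite (setOf H.HasEigenvalue) :=
      Set.infinite_of_injective_forall_mem
        (f := fun k : ℕ => ((n : ℂ) + 2 + 2 * k))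
        (fun a b hab => by
          have hab' : (n : ℂ) + 2 + 2 * a = (n : ℂ) + 2 + 2 * b := hab
          exact Nat.cast_injective (R := ℂ) (by linear_combination hab' / 2))
        (fun k => eigenvalue_of_mem_maxGen (hwV k) (hall k))
    exact hinf H.finite_hasEigenvalue
  have hm1pos : Nat.find hex ≠ 0 := by
    intro hc
    have h11 := Nat.find_spec hex
    rw [hc] at h11
    exact hu'0 (by simpa using h11)
  obtain ⟨m, hm⟩ : ∃ m : ℕ, Nat.find hex = m + 1 := ⟨Nat.find hex - 1, by omega⟩
  have hwm1 : (E ^ (m + 1)) u' = 0 := hm ▸ Nat.find_spec hex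
  have hwm : (E ^ m) u' ≠ 0 := Nat.find_min hex (by omega)
  -- the key sl2 commutation identity
  have keyid : ∀ (k : ℕ) (x : L), (E ^ (k + 1)) (F x)
      = F ((E ^ (k + 1)) x) + ((k : ℂ) + 1) • H ((E ^ k) x)
        - (((k : ℂ) + 1) * (k : ℂ)) • ((E ^ k) x) := by
    intro k
    induction k with
    | zero =>
      intro x
      simp only [zero_add, pow_one, pow_zero, Module.End.one_apply, Nat.cast_zero]
      rw [commEF x]
      module
    | succ k ih =>
      intro x
      rw [show (E ^ (k + 1 + 1)) (F x) = E ((E ^ (k + 1)) (F x)) from by rw [pow_succ' E (k+1)]; rfl]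
      rw [ih x, map_sub, map_add, map_smul, map_smul]
      have hEk : E ((E ^ k) x) = (E ^ (k + 1)) x := by rw [pow_succ' E k]; rfl
      have hEk1 : E ((E ^ (k + 1)) x) = (E ^ (k + 1 + 1)) x := by rw [pow_succ' E (k+1)]; rfl
      have hEH : E (H ((E ^ k) x)) = H ((E ^ (k + 1)) x) - (2 : ℂ) • ((E ^ (k + 1)) x) := by
        have h10 := commE ((E ^ k) x)
        rw [hEk] at h10
        exact eq_sub_of_add_eq h10.symm
      rw [commEF ((E ^ (k + 1)) x), hEH, hEk, hEk1]
      push_cast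
      module
  -- derive the contradiction
  have hEv : (E ^ (m + 1)) v = 0 := by
    have h12 : (E ^ (m + 1)) v = (E ^ m) (E v) := by rw [pow_succ]; rfl
    rw [h12, show E v = 0 from (hEapp v).trans hvE, map_zero]
  have hzero := keyid m u'
  rw [hFu', hEv, hwm1, map_zero, zero_add] at hzero
  have h11 : ((m : ℂ) + 1) • H ((E ^ m) u')
      = (((m : ℂ) + 1) * (m : ℂ)) • ((E ^ m) u') := sub_eq_zero.mp hzero.symm
  have hHwm : H ((E ^ m) u') = (m : ℂ) • ((E ^ m) u') := by
    refine smul_right_injective L (Nat.cast_add_one_ne_zero (R := ℂ) m) ?_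
    show ((m : ℂ) + 1) • H ((E ^ m) u') = ((m : ℂ) + 1) • ((m : ℂ) • ((E ^ m) u'))
    rw [h11, smul_smul]
  have hwmV : (E ^ m) u' ∈ V (m : ℂ) := by
    rw [hV, Module.End.mem_maxGenEigenspace]
    refine ⟨1, ?_⟩
    simp only [pow_one, LinearMap.sub_apply, LinearMap.smul_apply, Module.End.one_apply]
    rw [hHwm, sub_self]
  have hdeg : (n : ℂ) + 2 + 2 * m = (m : ℂ) :=
    DirectSum.degree_eq_of_mem_mem V (hwV m) hwmV hwm
  have hfalse : ((n + m + 2 : ℕ) : ℂ) = 0 := by push_cast; linear_combination hdeg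
  exact absurd (Nat.cast_eq_zero.mp hfalse) (by omega)

/-- For an `sl₂`-triple `(e, h, f)` in a finite-dimensional semisimple complex Lie
algebra `g`, one has the direct sum decomposition `g = g^e ⊕ [g, f]` of the
centralizer of `e` and the image of `ad f`. -/
theorem slodowy_transversality
    (L : Type*) [LieRing L] [LieAlgebra ℂ L] [FiniteDimensional ℂ L]
    [LieAlgebra.IsSemisimple ℂ L]
    (e h f : L) (he : e ≠ 0)
    (h1 : ⁅h, e⁆ = (2 : ℂ) • e) (h2 : ⁅h, f⁆ = (-2 : ℂ) • f) (h3 : ⁅e, f⁆ = h) :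
    (∀ x : L, ∃ y z : L, ⁅e, y⁆ = 0 ∧ x = y + ⁅f, z⁆) ∧
    (∀ y : L, ⁅e, y⁆ = 0 → (∃ z : L, y = ⁅f, z⁆) → y = 0) := by
  have auxEF := sl2_ker_inf_range e h f h1 h2 h3
  have auxFE := sl2_ker_inf_range f (-h) e
    (by rw [neg_lie, h2, neg_smul, neg_neg])
    (by rw [neg_lie, h1, neg_smul])
    (by rw [← lie_skew, h3])
  refine ⟨?_, auxEF⟩
  set E : Module.End ℂ L := LieAlgebra.ad ℂ L e with hE
  set F : Module.End ℂ L := LieAlgebra.ad ℂ L f with hF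
  have hdisj1 : LinearMap.ker E ⊓ LinearMap.range F = ⊥ := by
    rw [Submodule.eq_bot_iff]
    rintro x ⟨hx1, hx2⟩
    obtain ⟨w, hw⟩ := hx2
    exact auxEF x hx1 ⟨w, hw.symm⟩
  have hdisj2 : LinearMap.ker F ⊓ LinearMap.range E = ⊥ := by
    rw [Submodule.eq_bot_iff]
    rintro x ⟨hx1, hx2⟩
    obtain ⟨w, hw⟩ := hx2
    exact auxFE x hx1 ⟨w, hw.symm⟩
  have hrn1 := LinearMap.finrank_range_add_finrank_ker E
  have hrn2 := LinearMap.finrank_range_add_finrank_ker F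
  have hs1 := Submodule.finrank_sup_add_finrank_inf_eq (LinearMap.ker E) (LinearMap.range F)
  have hs2 := Submodule.finrank_sup_add_finrank_inf_eq (LinearMap.ker F) (LinearMap.range E)
  rw [hdisj1, finrank_bot, add_zero] at hs1
  rw [hdisj2, finrank_bot, add_zero] at hs2
  have hle1 : Module.finrank ℂ ↥(LinearMap.ker E ⊔ LinearMap.range F) ≤ Module.finrank ℂ L :=
    Submodule.finrank_le _
  have hle2 : Module.finrank ℂ ↥(LinearMap.ker F ⊔ LinearMap.range E) ≤ Module.finrank ℂ L :=
    Submodule.finrank_le _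
  have htop : LinearMap.ker E ⊔ LinearMap.range F = ⊤ :=
    Submodule.eq_top_of_finrank_eq (by omega)
  intro x
  have hx : x ∈ LinearMap.ker E ⊔ LinearMap.range F := htop ▸ Submodule.mem_top
  obtain ⟨a, ha, b, hb, hab⟩ := Submodule.mem_sup.mp hx
  obtain ⟨w, hw⟩ := hb
  exact ⟨a, w, ha, by rw [← hab, ← hw]; rfl⟩
end
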